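/- arXiv:2412.13340 — 9 statements merged into one kernel-verified Lean document; each statement's English description precedes it below -/
import Mathlib

section
/- Let n ≥ 1 and let f : Fin n → ℝ → ℝ be density functions, each integrable on [0,1] and nonnegative almost everywhere on [0,1]. Then for every permutation σ of Fin n there exists a cut-set x in the standard (n−1)-simplex such that, writing s_0 = 0 and s_k = x_1 + ⋯ + x_k, the values ∫_{s_{i−1}}^{s_i} f_{σ(i)}(z) dz are equal for all i; i.e., every permutation of an instance with nonnegative additive valuations admits a connected equitable division. -/
open MeasureTheory Finset

lemma exists_inverse (g : ℝ → ℝ) (hc : ContinuousOn g (Set.Icc 0 1))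
    (hm : StrictMonoOn g (Set.Icc 0 1)) :
    ∃ h : ℝ → ℝ, ContinuousOn h (Set.Icc (g 0) (g 1)) ∧
      (∀ y ∈ Set.Icc (g 0) (g 1), h y ∈ Set.Icc (0:ℝ) 1 ∧ g (h y) = y) := by
  have m0 : (0:ℝ) ∈ Set.Icc (0:ℝ) 1 := by norm_num
  have m1 : (1:ℝ) ∈ Set.Icc (0:ℝ) 1 := by norm_num
  have hmaps : ∀ t : Set.Icc (0:ℝ) 1, g t ∈ Set.Icc (g 0) (g 1) := by
    rintro ⟨t, ht⟩
    exact ⟨hm.monotoneOn m0 ht ht.1, hm.monotoneOn ht m1 ht.2⟩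
  have hsurj : Function.Surjective (fun t : Set.Icc (0:ℝ) 1 =>
      (⟨g t, hmaps t⟩ : Set.Icc (g 0) (g 1))) := by
    rintro ⟨y, hy⟩
    obtain ⟨t, ht, hgt⟩ := intermediate_value_Icc (zero_le_one) hc hy
    exact ⟨⟨t, ht⟩, Subtype.ext hgt⟩
  have hinj : Function.Injective (fun t : Set.Icc (0:ℝ) 1 =>
      (⟨g t, hmaps t⟩ : Set.Icc (g 0) (g 1))) := by
    rintro ⟨a, ha⟩ ⟨b, hb⟩ hab
    exact Subtype.ext (hm.injOn ha hb (congrArg Subtype.val hab))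
  set e : Set.Icc (0:ℝ) 1 ≃ Set.Icc (g 0) (g 1) :=
    Equiv.ofBijective _ ⟨hinj, hsurj⟩ with he
  have hecont : Continuous e := by
    have : Continuous fun t : Set.Icc (0:ℝ) 1 => g t :=
      continuousOn_iff_continuous_restrict.mp hc
    exact Continuous.subtype_mk this _
  set homeo := hecont.homeoOfEquivCompactToT2 with hhomeo
  refine ⟨fun y => if hy : y ∈ Set.Icc (g 0) (g 1) then (homeo.symm ⟨y, hy⟩ : ℝ) else 0,
    ?_, ?_⟩
  · rw [continuousOn_iff_continuous_restrict]
    have : (Set.Icc (g 0) (g 1)).domRestrict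
        (fun y => if hy : y ∈ Set.Icc (g 0) (g 1) then (homeo.symm ⟨y, hy⟩ : ℝ) else 0)
        = fun y => ((homeo.symm y : Set.Icc (0:ℝ) 1) : ℝ) := by
      funext y
      simp [Set.domRestrict]
    rw [this]
    exact continuous_subtype_val.comp homeo.symm.continuous
  · intro y hy
    simp only [dif_pos hy]
    refine ⟨(homeo.symm ⟨y, hy⟩).2, ?_⟩
    have : e (homeo.symm ⟨y, hy⟩) = ⟨y, hy⟩ := by
      rw [show e = homeo.toEquiv from rfl]
      exact homeo.toEquiv.apply_symm_apply _
    exact congrArg Subtype.val this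

noncomputable def cutSeq (G : ℕ → ℝ → ℝ) (inv : ℕ → ℝ → ℝ) (e : ℝ) : ℕ → ℝ
  | 0 => 0
  | k + 1 => inv k (min (G k 1) (G k (cutSeq G inv e k) + e))

lemma exists_equitable_cuts (n : ℕ) (hn : 1 ≤ n) (G : ℕ → ℝ → ℝ)
    (hc : ∀ k, ContinuousOn (G k) (Set.Icc 0 1))
    (hm : ∀ k, StrictMonoOn (G k) (Set.Icc 0 1))
    (h0 : ∀ k, G k 0 = 0) :
    ∃ s : ℕ → ℝ, s 0 = 0 ∧ s n = 1 ∧ (∀ k, s k ≤ s (k + 1)) ∧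
      (∀ k, s k ∈ Set.Icc (0:ℝ) 1) ∧
      ∃ e : ℝ, 0 ≤ e ∧ ∀ k < n, G k (s (k + 1)) - G k (s k) = e := by
  have m0 : (0:ℝ) ∈ Set.Icc (0:ℝ) 1 := by norm_num
  have m1 : (1:ℝ) ∈ Set.Icc (0:ℝ) 1 := by norm_num
  choose inv hinvc hinv using fun k => exists_inverse (G k) (hc k) (hm k)
  -- rewrite inverse domain using G k 0 = 0
  have hinvc' : ∀ k, ContinuousOn (inv k) (Set.Icc 0 (G k 1)) := by
    intro k; have := hinvc k; rwa [h0 k] at this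
  have hinv' : ∀ k, ∀ y ∈ Set.Icc (0:ℝ) (G k 1),
      inv k y ∈ Set.Icc (0:ℝ) 1 ∧ G k (inv k y) = y := by
    intro k; have := hinv k; rwa [h0 k] at this
  have hB : ∀ k, 0 < G k 1 := by
    intro k
    have := (hm k) m0 m1 zero_lt_one
    rwa [h0 k] at this
  set s : ℝ → ℕ → ℝ := cutSeq G inv with hs
  -- the `min` argument lands in the inverse's domain
  have harg : ∀ e : ℝ, 0 ≤ e → ∀ k, s e k ∈ Set.Icc (0:ℝ) 1 →
      min (G k 1) (G k (s e k) + e) ∈ Set.Icc (0:ℝ) (G k 1) := by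
    intro e he k hk
    constructor
    · refine le_min (hB k).le ?_
      have : G k 0 ≤ G k (s e k) := (hm k).monotoneOn m0 hk hk.1
      rw [h0 k] at this
      linarith
    · exact min_le_left _ _
  -- membership in [0,1]
  have hmem : ∀ e : ℝ, 0 ≤ e → ∀ k, s e k ∈ Set.Icc (0:ℝ) 1 := by
    intro e he k
    induction k with
    | zero => exact m0
    | succ k ih => exact (hinv' k _ (harg e he k ih)).1
  -- steps are monotone
  have hstep : ∀ e : ℝ, 0 ≤ e → ∀ k, s e k ≤ s e (k + 1) := by
    intro e he k
    have hk := hmem e he k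
    have harg' := harg e he k hk
    have h1 : G k (s e k) ≤ min (G k 1) (G k (s e k) + e) := by
      refine le_min ((hm k).monotoneOn hk m1 hk.2) (by linarith)
    have h2 := hinv' k _ harg'
    have : G k (s e k) ≤ G k (inv k (min (G k 1) (G k (s e k) + e))) := by
      rw [h2.2]; exact h1
    exact ((hm k).le_iff_le hk h2.1).mp this
  -- continuity in e
  have hcont : ∀ M : ℝ, 0 ≤ M → ∀ k, ContinuousOn (fun e => s e k) (Set.Icc 0 M) := by
    intro M hM k
    induction k with
    | zero => exact continuousOn_const
    | succ k ih =>
      have hmapsto : Set.MapsTo (fun e => s e k) (Set.Icc 0 M) (Set.Icc (0:ℝ) 1) :=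
        fun e he => hmem e he.1 k
      have hGc : ContinuousOn (fun e => G k (s e k)) (Set.Icc 0 M) :=
        (hc k).comp ih hmapsto
      have hinner : ContinuousOn (fun e => min (G k 1) (G k (s e k) + e)) (Set.Icc 0 M) :=
        continuousOn_const.inf (hGc.add continuousOn_id)
      have hmaps2 : Set.MapsTo (fun e => min (G k 1) (G k (s e k) + e)) (Set.Icc 0 M)
          (Set.Icc 0 (G k 1)) := fun e he => harg e he.1 k (hmem e he.1 k)
      exact (hinvc' k).comp hinner hmaps2
  -- s 0 k = 0
  have hzero : ∀ k, s 0 k = 0 := by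
    intro k
    induction k with
    | zero => rfl
    | succ k ih =>
      have : s 0 (k+1) = inv k (min (G k 1) (G k (s 0 k) + 0)) := rfl
      rw [this, ih, h0 k, add_zero, min_eq_right (hB k).le]
      have h2 := hinv' k 0 ⟨le_refl 0, (hB k).le⟩
      have h3 : G k (inv k 0) = G k 0 := by rw [h2.2, h0 k]
      exact (hm k).injOn h2.1 m0 h3
  -- the cap step: if G k 1 ≤ G k (s e k) + e then s e (k+1) = 1
  have hcap : ∀ e : ℝ, 0 ≤ e → ∀ k, G k 1 ≤ G k (s e k) + e → s e (k + 1) = 1 := by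
    intro e he k h
    have : s e (k+1) = inv k (min (G k 1) (G k (s e k) + e)) := rfl
    rw [this, min_eq_left h]
    have h2 := hinv' k (G k 1) ⟨(hB k).le, le_refl _⟩
    exact (hm k).injOn h2.1 m1 h2.2
  -- if s e k = 1 then s e (k+1) = 1
  have hone : ∀ e : ℝ, 0 ≤ e → ∀ k, s e k = 1 → s e (k + 1) = 1 := by
    intro e he k h
    exact hcap e he k (by rw [h]; linarith)
  set M : ℝ := ∑ k ∈ Finset.range n, G k 1 with hM
  have hM0 : 0 ≤ M := Finset.sum_nonneg fun k _ => (hB k).le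
  have hBM : ∀ k < n, G k 1 ≤ M := by
    intro k hk
    exact Finset.single_le_sum (f := fun k => G k 1) (fun j _ => (hB j).le)
      (Finset.mem_range.mpr hk)
  -- continuity of e ↦ G k (s e k)
  have hGcont : ∀ k, ContinuousOn (fun e => G k (s e k)) (Set.Icc 0 M) := by
    intro k
    exact (hc k).comp (hcont M hM0 k) (fun e he => hmem e he.1 k)
  -- s M n = 1
  have hMone : ∀ j, s M (j + 1) = 1 := by
    intro j
    induction j with
    | zero =>
      refine hcap M hM0 0 ?_
      have : s M 0 = 0 := rfl
      rw [this, h0 0, zero_add]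
      exact hBM 0 hn
    | succ j ih => exact hone M hM0 (j+1) ih
  set E : Set ℝ := {e : ℝ | e ∈ Set.Icc 0 M ∧ s e n = 1} with hE
  have hEne : (E : Set ℝ).Nonempty := by
    refine ⟨M, ⟨Set.right_mem_Icc.mpr hM0, ?_⟩⟩
    obtain ⟨m, rfl⟩ := Nat.exists_eq_add_of_le hn
    rw [add_comm]
    exact hMone m
  have hEbdd : BddBelow E := ⟨0, fun x hx => hx.1.1⟩
  have hEclosed : IsClosed E := by
    have : E = Set.Icc 0 M ∩ (fun e => s e n) ⁻¹' {1} := by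
      ext e; simp [hE, Set.mem_setOf_eq]
    rw [this]
    exact (hcont M hM0 n).preimage_isClosed_of_isClosed isClosed_Icc isClosed_singleton
  set c : ℝ := sInf E with hcdef
  have hcE : c ∈ E := hEclosed.csInf_mem hEne hEbdd
  have hc0 : 0 ≤ c := hcE.1.1
  have hcpos : 0 < c := by
    rcases hc0.lt_or_eq with h | h
    · exact h
    · exfalso
      have := hcE.2
      rw [← h, hzero n] at this
      norm_num at this
  -- no cap at the optimum
  have hnocap : ∀ k < n, G k (s c k) + c ≤ G k 1 := by
    intro k hk
    by_contra hcap'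
    push_neg at hcap'
    have htend : Filter.Tendsto (fun e => G k (s e k) + e)
        (nhdsWithin c (Set.Icc 0 M)) (nhds (G k (s c k) + c)) :=
      ((hGcont k).add continuousOn_id) c hcE.1
    have ev1 : ∀ᶠ e in nhdsWithin c (Set.Icc 0 M), G k 1 < G k (s e k) + e :=
      htend.eventually_const_lt hcap'
    have hLne : (nhdsWithin c (Set.Ico 0 c)).NeBot := by
      refine mem_closure_iff_nhdsWithin_neBot.mp ?_
      rw [closure_Ico hcpos.ne]
      exact Set.right_mem_Icc.mpr hc0
    have hLle : nhdsWithin c (Set.Ico 0 c) ≤ nhdsWithin c (Set.Icc 0 M) :=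
      nhdsWithin_mono _ (fun x hx => ⟨hx.1, le_trans hx.2.le hcE.1.2⟩)
    have ev2 : ∀ᶠ e in nhdsWithin c (Set.Ico 0 c), e ∈ Set.Ico 0 c :=
      self_mem_nhdsWithin
    obtain ⟨e, he1, he2⟩ := ((ev1.filter_mono hLle).and ev2).exists
    have he0 : 0 ≤ e := he2.1
    have hseq1 : s e (k + 1) = 1 := hcap e he0 k he1.le
    have hseqn : s e n = 1 := by
      have : ∀ j, k + 1 ≤ j → s e j = 1 := by
        intro j hj
        induction j, hj using Nat.le_induction with
        | base => exact hseq1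
        | succ j hj ih => exact hone e he0 j ih
      exact this n hk
    have heE : e ∈ E := ⟨⟨he0, le_trans he2.2.le hcE.1.2⟩, hseqn⟩
    have := csInf_le hEbdd heE
    rw [← hcdef] at this
    exact absurd (lt_of_le_of_lt this he2.2) (lt_irrefl c)
  refine ⟨s c, rfl, hcE.2, hstep c hc0, hmem c hc0, c, hc0, ?_⟩
  intro k hk
  have harg' := harg c hc0 k (hmem c hc0 k)
  have hmin : min (G k 1) (G k (s c k) + c) = G k (s c k) + c :=
    min_eq_right (hnocap k hk)
  have : s c (k + 1) = inv k (min (G k 1) (G k (s c k) + c)) := rfl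
  rw [this, hmin]
  rw [hmin] at harg'
  rw [(hinv' k _ harg').2]
  ring

lemma map_Iio_fin {n : ℕ} (i : Fin n) :
    (Finset.Iio i).map Fin.valEmbedding = Finset.range i.val := by
  ext j
  simp only [Finset.mem_map, Finset.mem_Iio, Fin.valEmbedding_apply, Finset.mem_range]
  constructor
  · rintro ⟨k, hk, rfl⟩
    exact hk
  · intro hj
    exact ⟨⟨j, hj.trans i.isLt⟩, by simpa [Fin.lt_def] using hj, rfl⟩

lemma map_Iic_fin {n : ℕ} (i : Fin n) :
    (Finset.Iic i).map Fin.valEmbedding = Finset.range (i.val + 1) := by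
  ext j
  simp only [Finset.mem_map, Finset.mem_Iic, Fin.valEmbedding_apply, Finset.mem_range,
    Nat.lt_succ_iff]
  constructor
  · rintro ⟨k, hk, rfl⟩
    exact hk
  · intro hj
    exact ⟨⟨j, lt_of_le_of_lt hj i.isLt⟩, by simpa [Fin.le_def] using hj, rfl⟩

lemma sum_Iio_fin {n : ℕ} (g : ℕ → ℝ) (i : Fin n) :
    ∑ k ∈ Finset.Iio i, g k.val = ∑ j ∈ Finset.range i.val, g j := by
  rw [← map_Iio_fin i, Finset.sum_map]
  rfl

lemma sum_Iic_fin {n : ℕ} (g : ℕ → ℝ) (i : Fin n) :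
    ∑ k ∈ Finset.Iic i, g k.val = ∑ j ∈ Finset.range (i.val + 1), g j := by
  rw [← map_Iic_fin i, Finset.sum_map]
  rfl

/-- **Every permutation of an instance with nonnegative additive valuations admits a
connected equitable division.** Agent in position `i` (with valuation `f (σ i)`) receives
the subinterval from `∑ k < i, x k` to `∑ k ≤ i, x k`. -/
theorem nonneg_additive_perm_exists_equitable (n : ℕ) (hn : 1 ≤ n) (f : Fin n → ℝ → ℝ)
    (hint : ∀ i, IntegrableOn (f i) (Set.Icc 0 1))
    (hnonneg : ∀ i, ∀ᵐ z ∂(volume.restrict (Set.Icc (0:ℝ) 1)), 0 ≤ f i z)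
    (σ : Equiv.Perm (Fin n)) :
    ∃ x ∈ stdSimplex ℝ (Fin n), ∀ i j : Fin n,
      (∫ z in (∑ k ∈ Finset.Iio i, x k)..(∑ k ∈ Finset.Iic i, x k), f (σ i) z) =
      (∫ z in (∑ k ∈ Finset.Iio j, x k)..(∑ k ∈ Finset.Iic j, x k), f (σ j) z) := by
  set H : Fin n → ℝ → ℝ := fun j t => ∫ z in (0:ℝ)..t, f j z with hH
  have Hcont : ∀ j, ContinuousOn (H j) (Set.Icc 0 1) := by
    intro j
    have h1 : IntegrableOn (f j) (Set.uIcc (0:ℝ) 1) := by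
      rw [Set.uIcc_of_le zero_le_one]
      exact hint j
    have := intervalIntegral.continuousOn_primitive_interval (a := (0:ℝ)) (b := 1)
      (μ := volume) h1
    rwa [Set.uIcc_of_le zero_le_one] at this
  have II : ∀ (j : Fin n) (a b : ℝ), 0 ≤ a → a ≤ b → b ≤ 1 →
      IntervalIntegrable (f j) volume a b := by
    intro j a b ha hab hb
    have h1 : IntegrableOn (f j) (Set.uIcc a b) := by
      rw [Set.uIcc_of_le hab]
      exact (hint j).mono_set (Set.Icc_subset_Icc ha hb)
    exact h1.intervalIntegrable
  have Hsub : ∀ (j : Fin n) (a b : ℝ), 0 ≤ a → a ≤ b → b ≤ 1 →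
      (∫ z in a..b, f j z) = H j b - H j a := by
    intro j a b ha hab hb
    exact (intervalIntegral.integral_interval_sub_left
      (II j 0 b le_rfl (ha.trans hab) hb) (II j 0 a le_rfl ha (hab.trans hb))).symm
  have Hnonneg : ∀ (j : Fin n) (a b : ℝ), 0 ≤ a → a ≤ b → b ≤ 1 →
      0 ≤ ∫ z in a..b, f j z := by
    intro j a b ha hab hb
    refine intervalIntegral.integral_nonneg_of_ae_restrict hab ?_
    have := ae_restrict_of_ae_restrict_of_subset (Set.Icc_subset_Icc ha hb) (hnonneg j)
    filter_upwards [this] with z hz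
    simpa using hz
  -- bounds on partial sums over the simplex
  have hbounds : ∀ y ∈ stdSimplex ℝ (Fin n), ∀ i : Fin n,
      0 ≤ (∑ k ∈ Finset.Iio i, y k) ∧
      (∑ k ∈ Finset.Iio i, y k) ≤ (∑ k ∈ Finset.Iic i, y k) ∧
      (∑ k ∈ Finset.Iic i, y k) ≤ 1 := by
    intro y hy i
    refine ⟨Finset.sum_nonneg fun k _ => hy.1 k, ?_, ?_⟩
    · exact Finset.sum_le_sum_of_subset_of_nonneg Finset.Iio_subset_Iic_self
        (fun k _ _ => hy.1 k)
    · rw [← hy.2]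
      exact Finset.sum_le_sum_of_subset_of_nonneg (Finset.subset_univ _)
        (fun k _ _ => hy.1 k)
  -- Step 1: perturbed equitable divisions
  have key : ∀ m : ℕ, ∃ x ∈ stdSimplex ℝ (Fin n), ∀ i j : Fin n,
      (∫ z in (∑ k ∈ Finset.Iio i, x k)..(∑ k ∈ Finset.Iic i, x k), f (σ i) z)
        + (1 / ((m : ℝ) + 1)) * x i =
      (∫ z in (∑ k ∈ Finset.Iio j, x k)..(∑ k ∈ Finset.Iic j, x k), f (σ j) z)
        + (1 / ((m : ℝ) + 1)) * x j := by
    intro m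
    set ε : ℝ := 1 / ((m : ℝ) + 1) with hε
    have hεpos : 0 < ε := by positivity
    set G : ℕ → ℝ → ℝ := fun k t => if h : k < n then H (σ ⟨k, h⟩) t + ε * t else t with hG
    have hGc : ∀ k, ContinuousOn (G k) (Set.Icc 0 1) := by
      intro k
      by_cases h : k < n
      · simp only [hG, dif_pos h]
        exact (Hcont _).add ((continuous_const.mul continuous_id).continuousOn)
      · simp only [hG, dif_neg h]
        exact continuousOn_id
    have hGm : ∀ k, StrictMonoOn (G k) (Set.Icc 0 1) := by
      intro k a ha b hb hab
      by_cases h : k < n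
      · simp only [hG, dif_pos h]
        have h1 : 0 ≤ ∫ z in a..b, f (σ ⟨k, h⟩) z :=
          Hnonneg _ a b ha.1 hab.le hb.2
        have h2 : (∫ z in a..b, f (σ ⟨k, h⟩) z) = H (σ ⟨k, h⟩) b - H (σ ⟨k, h⟩) a :=
          Hsub _ a b ha.1 hab.le hb.2
        have h3 : ε * a < ε * b := mul_lt_mul_of_pos_left hab hεpos
        linarith [h2 ▸ h1]
      · simp only [hG, dif_neg h]
        exact hab
    have hG0 : ∀ k, G k 0 = 0 := by
      intro k
      by_cases h : k < n
      · simp only [hG, dif_pos h, hH, intervalIntegral.integral_same, mul_zero, add_zero]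
      · simp [hG, dif_neg h]
    obtain ⟨s, hs0, hsn, hstep, hmem, e, he0, heq⟩ := exists_equitable_cuts n hn G hGc hGm hG0
    refine ⟨fun i => s (i.val + 1) - s i.val, ⟨fun i => ?_, ?_⟩, ?_⟩
    · simpa [sub_nonneg] using hstep i.val
    · rw [Fin.sum_univ_eq_sum_range (fun j => s (j + 1) - s j) n, Finset.sum_range_sub s n,
        hs0, hsn, sub_zero]
    · intro i j
      have hA : ∀ l : Fin n, ∑ k ∈ Finset.Iio l, (s (k.val + 1) - s k.val) = s l.val := by
        intro l
        rw [sum_Iio_fin (fun j => s (j + 1) - s j) l, Finset.sum_range_sub s l.val, hs0,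
          sub_zero]
      have hB : ∀ l : Fin n, ∑ k ∈ Finset.Iic l, (s (k.val + 1) - s k.val) = s (l.val + 1) := by
        intro l
        rw [sum_Iic_fin (fun j => s (j + 1) - s j) l, Finset.sum_range_sub s (l.val + 1), hs0,
          sub_zero]
      have hval : ∀ l : Fin n,
          (∫ z in (∑ k ∈ Finset.Iio l, (s (k.val + 1) - s k.val))..(∑ k ∈ Finset.Iic l,
            (s (k.val + 1) - s k.val)), f (σ l) z) + ε * (s (l.val + 1) - s l.val) = e := by
        intro l
        rw [hA l, hB l]
        have hmeml := hmem l.val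
        have hmeml1 := hmem (l.val + 1)
        have hstepl := hstep l.val
        rw [Hsub (σ l) (s l.val) (s (l.val + 1)) hmeml.1 hstepl hmeml1.2]
        have := heq l.val l.isLt
        simp only [hG, dif_pos l.isLt, Fin.eta] at this
        linarith [this]
      rw [hval i, hval j]
  choose xs hxs hxe using key
  obtain ⟨x, hx, φ, hφ, hconv⟩ := (isCompact_stdSimplex ℝ (Fin n)).tendsto_subseq hxs
  refine ⟨x, hx, ?_⟩
  intro i j
  have hconv' : ∀ k : Fin n, Filter.Tendsto (fun m => xs (φ m) k) Filter.atTop (nhds (x k)) :=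
    fun k => tendsto_pi_nhds.mp hconv k
  have tendsto_eps : Filter.Tendsto (fun m => 1 / ((φ m : ℝ) + 1)) Filter.atTop (nhds 0) :=
    tendsto_one_div_add_atTop_nhds_zero_nat.comp hφ.tendsto_atTop
  -- limit of each side
  have tendL : ∀ l : Fin n, Filter.Tendsto
      (fun m => (∫ z in (∑ k ∈ Finset.Iio l, xs (φ m) k)..(∑ k ∈ Finset.Iic l, xs (φ m) k),
        f (σ l) z) + (1 / ((φ m : ℝ) + 1)) * xs (φ m) l)
      Filter.atTop
      (nhds ((∫ z in (∑ k ∈ Finset.Iio l, x k)..(∑ k ∈ Finset.Iic l, x k), f (σ l) z)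
        + 0 * x l)) := by
    intro l
    have hbx := hbounds x hx l
    have tendA : Filter.Tendsto (fun m => ∑ k ∈ Finset.Iio l, xs (φ m) k) Filter.atTop
        (nhds (∑ k ∈ Finset.Iio l, x k)) :=
      tendsto_finset_sum _ fun k _ => hconv' k
    have tendB : Filter.Tendsto (fun m => ∑ k ∈ Finset.Iic l, xs (φ m) k) Filter.atTop
        (nhds (∑ k ∈ Finset.Iic l, x k)) :=
      tendsto_finset_sum _ fun k _ => hconv' k
    have memA : (∑ k ∈ Finset.Iio l, x k) ∈ Set.Icc (0:ℝ) 1 :=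
      ⟨hbx.1, hbx.2.1.trans hbx.2.2⟩
    have memB : (∑ k ∈ Finset.Iic l, x k) ∈ Set.Icc (0:ℝ) 1 :=
      ⟨hbx.1.trans hbx.2.1, hbx.2.2⟩
    have tendHA : Filter.Tendsto (fun m => H (σ l) (∑ k ∈ Finset.Iio l, xs (φ m) k))
        Filter.atTop (nhds (H (σ l) (∑ k ∈ Finset.Iio l, x k))) := by
      refine ((Hcont (σ l) _ memA).tendsto).comp (tendsto_nhdsWithin_iff.mpr ⟨tendA, ?_⟩)
      refine Filter.Eventually.of_forall fun m => ?_
      have hb := hbounds (xs (φ m)) (hxs (φ m)) l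
      exact ⟨hb.1, hb.2.1.trans hb.2.2⟩
    have tendHB : Filter.Tendsto (fun m => H (σ l) (∑ k ∈ Finset.Iic l, xs (φ m) k))
        Filter.atTop (nhds (H (σ l) (∑ k ∈ Finset.Iic l, x k))) := by
      refine ((Hcont (σ l) _ memB).tendsto).comp (tendsto_nhdsWithin_iff.mpr ⟨tendB, ?_⟩)
      refine Filter.Eventually.of_forall fun m => ?_
      have hb := hbounds (xs (φ m)) (hxs (φ m)) l
      exact ⟨hb.1.trans hb.2.1, hb.2.2⟩
    have tendI : Filter.Tendsto
        (fun m => (∫ z in (∑ k ∈ Finset.Iio l, xs (φ m) k)..(∑ k ∈ Finset.Iic l, xs (φ m) k),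
          f (σ l) z)) Filter.atTop
        (nhds ((∫ z in (∑ k ∈ Finset.Iio l, x k)..(∑ k ∈ Finset.Iic l, x k), f (σ l) z))) := by
      have h1 := tendHB.sub tendHA
      have h2 : ∀ m, H (σ l) (∑ k ∈ Finset.Iic l, xs (φ m) k)
          - H (σ l) (∑ k ∈ Finset.Iio l, xs (φ m) k)
          = ∫ z in (∑ k ∈ Finset.Iio l, xs (φ m) k)..(∑ k ∈ Finset.Iic l, xs (φ m) k),
            f (σ l) z := by
        intro m
        have hb := hbounds (xs (φ m)) (hxs (φ m)) l
        exact (Hsub (σ l) _ _ hb.1 hb.2.1 hb.2.2).symm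
      have h3 := h1.congr h2
      rwa [← Hsub (σ l) _ _ hbx.1 hbx.2.1 hbx.2.2] at h3
    exact tendI.add (tendsto_eps.mul (hconv' l))
  have keyi := tendL i
  have keyj := (tendL j).congr fun m => (hxe (φ m) i j).symm
  have := tendsto_nhds_unique keyi keyj
  simpa using this
end

section
/- Let n ≥ 1 and let v : Fin n → (stdSimplex ℝ (Fin n)) → ℝ be valuations of a SANN instance (v i x = 0 whenever x i = 0, and for every cut-set x some agent i has x i > 0 and v i x ≥ 0). Define the happiest agent h⁺(x) as the lexicographically first agent among those maximizing v_i(x) that, among such maximizers, have the largest coordinate x_i. Then: (1) for each agent i, at the vertex e_i of the simplex the happiest agent is i, i.e., h⁺(e_i) = i; and (2) for every cut-set x with x_i = 0, the happiest agent is not i, i.e., h⁺(x) ≠ i. -/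
open Classical in
/-- The largest value any agent has at cut-set `x`. -/
noncomputable def vmax {n : ℕ} (hn : 1 ≤ n) (v : Fin n → stdSimplex ℝ (Fin n) → ℝ)
    (x : stdSimplex ℝ (Fin n)) : ℝ :=
  Finset.univ.sup' ⟨⟨0, hn⟩, Finset.mem_univ _⟩ (fun i => v i x)

open Classical in
/-- The set of happy agents: those whose value equals the maximum value. -/
noncomputable def happySet {n : ℕ} (hn : 1 ≤ n) (v : Fin n → stdSimplex ℝ (Fin n) → ℝ)
    (x : stdSimplex ℝ (Fin n)) : Finset (Fin n) :=
  Finset.univ.filter (fun i => v i x = vmax hn v x)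

theorem happySet_nonempty {n : ℕ} (hn : 1 ≤ n) (v : Fin n → stdSimplex ℝ (Fin n) → ℝ)
    (x : stdSimplex ℝ (Fin n)) : (happySet hn v x).Nonempty := by
  classical
  obtain ⟨i, -, hi⟩ :=
    Finset.exists_mem_eq_sup' (⟨⟨0, hn⟩, Finset.mem_univ _⟩ :
      (Finset.univ : Finset (Fin n)).Nonempty) (fun i => v i x)
  exact ⟨i, Finset.mem_filter.mpr ⟨Finset.mem_univ _, hi.symm⟩⟩

open Classical in
/-- The set of happier agents: happy agents with the largest quantity of cake. -/
noncomputable def happierSet {n : ℕ} (hn : 1 ≤ n) (v : Fin n → stdSimplex ℝ (Fin n) → ℝ)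
    (x : stdSimplex ℝ (Fin n)) : Finset (Fin n) :=
  (happySet hn v x).filter
    (fun k => (x : Fin n → ℝ) k =
      (happySet hn v x).sup' (happySet_nonempty hn v x) (fun i => (x : Fin n → ℝ) i))

theorem happierSet_nonempty {n : ℕ} (hn : 1 ≤ n) (v : Fin n → stdSimplex ℝ (Fin n) → ℝ)
    (x : stdSimplex ℝ (Fin n)) : (happierSet hn v x).Nonempty := by
  classical
  obtain ⟨i, hi, hix⟩ :=
    Finset.exists_mem_eq_sup' (happySet_nonempty hn v x) (fun i => (x : Fin n → ℝ) i)
  exact ⟨i, Finset.mem_filter.mpr ⟨hi, hix.symm⟩⟩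

/-- The happiest agent: the lexicographically first happier agent. -/
noncomputable def happiest {n : ℕ} (hn : 1 ≤ n) (v : Fin n → stdSimplex ℝ (Fin n) → ℝ)
    (x : stdSimplex ℝ (Fin n)) : Fin n :=
  (happierSet hn v x).min' (happierSet_nonempty hn v x)

/-- **The happiest-agent labeling of a SANN instance is a Sperner labeling**:
(1) the vertex `e i` of the simplex is labeled `i`, and
(2) no cut-set on the facet opposite `e i` (i.e. with `x i = 0`) is labeled `i`. -/
theorem happiest_sperner_labeling (n : ℕ) (hn : 1 ≤ n)
    (v : Fin n → stdSimplex ℝ (Fin n) → ℝ)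
    (hzero : ∀ (i : Fin n) (x : stdSimplex ℝ (Fin n)), (x : Fin n → ℝ) i = 0 → v i x = 0)
    (hsann : ∀ x : stdSimplex ℝ (Fin n), ∃ i, 0 < (x : Fin n → ℝ) i ∧ 0 ≤ v i x) :
    (∀ i : Fin n, happiest hn v ⟨Pi.single i 1, single_mem_stdSimplex ℝ i⟩ = i) ∧
    (∀ (i : Fin n) (x : stdSimplex ℝ (Fin n)), (x : Fin n → ℝ) i = 0 →
      happiest hn v x ≠ i) := by
  classical
  constructor
  · intro i
    set e : stdSimplex ℝ (Fin n) := ⟨Pi.single i 1, single_mem_stdSimplex ℝ i⟩ with he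
    have hej : (e : Fin n → ℝ) = Pi.single i 1 := rfl
    have hvj : ∀ j, j ≠ i → v j e = 0 := by
      intro j hj
      exact hzero j e (by simp [hej, Pi.single_apply, hj])
    have hvi : 0 ≤ v i e := by
      obtain ⟨k, hk1, hk2⟩ := hsann e
      have hk : k = i := by
        by_contra hk
        rw [hej, Pi.single_apply, if_neg hk] at hk1
        exact lt_irrefl 0 hk1
      rwa [hk] at hk2
    have hvmax : vmax hn v e = v i e := by
      apply le_antisymm
      · apply Finset.sup'_le
        intro j _
        rcases eq_or_ne j i with rfl | hj
        · exact le_rfl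
        · rw [hvj j hj]; exact hvi
      · exact Finset.le_sup' (fun j => v j e) (Finset.mem_univ i)
    have hiH : i ∈ happySet hn v e :=
      Finset.mem_filter.mpr ⟨Finset.mem_univ _, hvmax.symm⟩
    have hsup : (happySet hn v e).sup' (happySet_nonempty hn v e)
        (fun j => (e : Fin n → ℝ) j) = 1 := by
      apply le_antisymm
      · apply Finset.sup'_le
        intro j _
        rw [hej, Pi.single_apply]
        split <;> norm_num
      · have := Finset.le_sup' (fun j => (e : Fin n → ℝ) j) hiH
        exact le_trans (by simp [hej]) this
    have hmem : happiest hn v e ∈ happierSet hn v e := Finset.min'_mem _ _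
    obtain ⟨-, hx⟩ := Finset.mem_filter.mp hmem
    rw [hsup, hej, Pi.single_apply] at hx
    by_contra hne
    rw [if_neg hne] at hx
    exact one_ne_zero hx.symm
  · intro i x hxi hcontra
    have hmem : happiest hn v x ∈ happierSet hn v x := Finset.min'_mem _ _
    rw [hcontra] at hmem
    obtain ⟨hiH, hix⟩ := Finset.mem_filter.mp hmem
    have hviz : v i x = 0 := hzero i x hxi
    have hvmax0 : vmax hn v x = 0 := by
      have h := (Finset.mem_filter.mp hiH).2
      rw [hviz] at h; exact h.symm
    obtain ⟨k, hk1, hk2⟩ := hsann x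
    have hvk : v k x = 0 :=
      le_antisymm (hvmax0 ▸ Finset.le_sup' (fun j => v j x) (Finset.mem_univ k)) hk2
    have hkH : k ∈ happySet hn v x :=
      Finset.mem_filter.mpr ⟨Finset.mem_univ _, by rw [hvk, hvmax0]⟩
    have hle : (x : Fin n → ℝ) k ≤ (happySet hn v x).sup'
        (happySet_nonempty hn v x) (fun j => (x : Fin n → ℝ) j) :=
      Finset.le_sup' _ hkH
    rw [← hix, hxi] at hle
    linarith
end

section
/- Let n ≥ 1 and let f : Fin n → ℝ → ℝ be density functions integrable on [0,1], with cumulative distribution functions F_i(t) = ∫_0^t f_i(z) dz. Suppose the instance is value-ordered, i.e., F_i(t) ≥ F_{i+1}(t) for all t ∈ [0,1] and all i ∈ {1,…,n−1}, and that every agent has nonnegative value for the entire cake, F_i(1) ≥ 0 for all i. Then for every cut-set x in the standard (n−1)-simplex there exists an agent i with x_i > 0 and ∫_{s_{i−1}}^{s_i} f_i(z) dz ≥ 0, where s_k = x_1 + ⋯ + x_k; i.e., the instance is SANN. -/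
open MeasureTheory Finset

/-- **A value-ordered instance (with every agent having nonnegative value for the whole
cake) is a SANN instance**: for every cut-set some agent gets a piece of positive length
with nonnegative value. -/
theorem value_ordered_is_sann (n : ℕ) (hn : 1 ≤ n) (f : Fin n → ℝ → ℝ)
    (hint : ∀ i, IntegrableOn (f i) (Set.Icc 0 1))
    (hord : ∀ (i : ℕ) (hi : i + 1 < n), ∀ t ∈ Set.Icc (0:ℝ) 1,
      (∫ z in (0:ℝ)..t, f ⟨i + 1, hi⟩ z) ≤ ∫ z in (0:ℝ)..t, f ⟨i, Nat.lt_of_succ_lt hi⟩ z)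
    (hcake : ∀ i, 0 ≤ ∫ z in (0:ℝ)..1, f i z)
    (x : Fin n → ℝ) (hx : x ∈ stdSimplex ℝ (Fin n)) :
    ∃ i : Fin n, 0 < x i ∧
      0 ≤ ∫ z in (∑ k ∈ Finset.Iio i, x k)..(∑ k ∈ Finset.Iic i, x k), f i z := by
  by_contra hcon
  push_neg at hcon
  obtain ⟨hx0, hx1⟩ := hx
  set x' : ℕ → ℝ := fun k => if h : k < n then x ⟨k, h⟩ else 0 with hx'def
  set S : ℕ → ℝ := fun m => ∑ k ∈ Finset.range m, x' k with hSdef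
  have hx'nonneg : ∀ k, 0 ≤ x' k := by
    intro k; simp only [hx'def]; split
    · exact hx0 _
    · exact le_refl 0
  have hS0 : S 0 = 0 := by simp [hSdef]
  have hSn : S n = 1 := by
    show ∑ k ∈ Finset.range n, x' k = 1
    rw [← hx1, ← Fin.sum_univ_eq_sum_range]
    exact Finset.sum_congr rfl fun i _ => by simp [hx'def, i.isLt]
  have hSmono : Monotone S := by
    intro a b hab
    exact Finset.sum_le_sum_of_subset_of_nonneg (Finset.range_subset_range.2 hab)
      (fun k _ _ => hx'nonneg k)
  have hSmem : ∀ m, m ≤ n → S m ∈ Set.Icc (0:ℝ) 1 := by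
    intro m hm
    exact ⟨Finset.sum_nonneg fun k _ => hx'nonneg k, hSn ▸ hSmono hm⟩
  -- interval integrability
  have hii : ∀ (i : Fin n) (a b : ℝ), a ∈ Set.Icc (0:ℝ) 1 → b ∈ Set.Icc (0:ℝ) 1 →
      IntervalIntegrable (f i) volume a b := by
    intro i a b ha hb
    rw [intervalIntegrable_iff]
    exact (hint i).mono_set (Set.uIoc_subset_uIcc.trans (Set.uIcc_subset_Icc ha hb))
  -- sums over Fin intervals equal S
  have hIio : ∀ i : Fin n, ∑ k ∈ Finset.Iio i, x k = S i.val := by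
    intro i
    show _ = ∑ k ∈ Finset.range i.val, x' k
    rw [← Nat.Iio_eq_range, ← Fin.map_valEmbedding_Iio, Finset.sum_map]
    exact Finset.sum_congr rfl fun k _ => by simp [hx'def, k.isLt]
  have hIic : ∀ i : Fin n, ∑ k ∈ Finset.Iic i, x k = S (i.val + 1) := by
    intro i
    show _ = ∑ k ∈ Finset.range (i.val + 1), x' k
    have hr : Finset.range (i.val + 1) = Finset.Iic (i.val : ℕ) := by
      ext k; simp [Nat.lt_succ_iff]
    rw [hr, ← Fin.map_valEmbedding_Iic, Finset.sum_map]
    exact Finset.sum_congr rfl fun k _ => by simp [hx'def, k.isLt]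
  -- the value of agent i as an ℕ-indexed function
  set V : ℕ → ℝ := fun i =>
    if h : i < n then ∫ z in (S i)..(S (i + 1)), f ⟨i, h⟩ z else 0 with hVdef
  have hVval : ∀ i : Fin n, V i.val = ∫ z in (S i.val)..(S (i.val + 1)), f i z := by
    intro i; simp [hVdef, i.isLt]
  -- each value is nonpositive
  have hVnonpos : ∀ i : Fin n, V i.val ≤ 0 := by
    intro i
    rw [hVval i]
    rcases lt_or_eq_of_le (hx0 i) with hpos | heq
    · have := hcon i hpos
      rw [hIio i, hIic i] at this
      exact this.le
    · have hSi : S (i.val + 1) = S i.val := by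
        show ∑ k ∈ Finset.range (i.val + 1), x' k = ∑ k ∈ Finset.range i.val, x' k
        rw [Finset.sum_range_succ]
        have : x' i.val = 0 := by simp [hx'def, i.isLt, ← heq]
        rw [this, add_zero]
      rw [hSi, intervalIntegral.integral_same]
  -- some agent has positive length, strict negativity
  have hex : ∃ i : Fin n, 0 < x i := by
    by_contra h
    push_neg at h
    have : (1:ℝ) ≤ 0 := by
      rw [← hx1]
      exact Finset.sum_nonpos fun i _ => h i
    linarith
  obtain ⟨i₀, hi₀⟩ := hex
  have hVneg : V i₀.val < 0 := by
    rw [hVval i₀]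
    have := hcon i₀ hi₀
    rwa [hIio i₀, hIic i₀] at this
  -- sum of values is negative
  have hsumneg : ∑ i ∈ Finset.range n, V i < 0 := by
    have h1 : ∑ i ∈ Finset.range n, V i < ∑ i ∈ Finset.range n, (0:ℝ) := by
      apply Finset.sum_lt_sum
      · intro i hi
        exact hVnonpos ⟨i, Finset.mem_range.1 hi⟩
      · exact ⟨i₀.val, Finset.mem_range.2 i₀.isLt, hVneg⟩
    simpa using h1
  -- telescoping lower bound
  have key : ∀ m (hm : m + 1 ≤ n),
      (∫ z in (0:ℝ)..(S (m + 1)), f ⟨m, hm⟩ z) ≤ ∑ i ∈ Finset.range (m + 1), V i := by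
    intro m
    induction m with
    | zero =>
      intro hm
      rw [Finset.sum_range_one]
      have hV0 : V 0 = ∫ z in (S 0)..(S 1), f ⟨0, hm⟩ z := by
        simp only [hVdef]
        rw [dif_pos (Nat.lt_of_succ_le hm)]
      rw [hV0, hS0]
    | succ m ih =>
      intro hm
      have hm' : m + 1 ≤ n := le_of_lt (Nat.lt_of_succ_le hm)
      have hmn : m < n := Nat.lt_of_succ_le hm'
      have hm1n : m + 1 < n := Nat.lt_of_succ_le hm
      rw [Finset.sum_range_succ]
      have hVm1 : V (m + 1) = ∫ z in (S (m + 1))..(S (m + 2)), f ⟨m + 1, hm1n⟩ z := by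
        simp only [hVdef]
        rw [dif_pos hm1n]
      have hint1 : IntervalIntegrable (f ⟨m + 1, hm1n⟩) volume 0 (S (m + 1)) :=
        hii _ _ _ (Set.left_mem_Icc.2 zero_le_one) (hSmem _ hm')
      have hint2 : IntervalIntegrable (f ⟨m + 1, hm1n⟩) volume 0 (S (m + 2)) :=
        hii _ _ _ (Set.left_mem_Icc.2 zero_le_one) (hSmem _ hm)
      have hsplit : (∫ z in (0:ℝ)..(S (m + 2)), f ⟨m + 1, hm1n⟩ z) -
          (∫ z in (0:ℝ)..(S (m + 1)), f ⟨m + 1, hm1n⟩ z) =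
          ∫ z in (S (m + 1))..(S (m + 2)), f ⟨m + 1, hm1n⟩ z :=
        intervalIntegral.integral_interval_sub_left hint2 hint1
      have hord' : (∫ z in (0:ℝ)..(S (m + 1)), f ⟨m + 1, hm1n⟩ z) ≤
          ∫ z in (0:ℝ)..(S (m + 1)), f ⟨m, hmn⟩ z :=
        hord m hm1n (S (m + 1)) (hSmem _ hm')
      have hih : (∫ z in (0:ℝ)..(S (m + 1)), f ⟨m, hmn⟩ z) ≤
          ∑ i ∈ Finset.range (m + 1), V i := ih hm'
      rw [hVm1]
      linarith
  -- conclude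
  obtain ⟨m, rfl⟩ : ∃ m, n = m + 1 := ⟨n - 1, (Nat.succ_pred_eq_of_pos hn).symm⟩
  have hkey := key m (le_refl _)
  rw [hSn] at hkey
  exact absurd (le_trans (hcake _) hkey) (not_le.2 hsumneg)
end

section
/- Let n ≥ 1 and let f : Fin n → ℝ → ℝ be density functions integrable on [0,1] with cdfs F_i(t) = ∫_0^t f_i(z) dz satisfying F_i(t) ≥ F_{i+1}(t) for all t ∈ [0,1] and i ∈ {1,…,n−1} (value-ordered). Then for every cut-set x in the standard (n−1)-simplex and every i ∈ {1,…,n}, the total value obtained by agents 1,…,i satisfies Σ_{j=1}^{i} ∫_{s_{j−1}}^{s_j} f_j(z) dz ≥ F_i(s_i), where s_k = x_1 + ⋯ + x_k and s_0 = 0. -/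
open MeasureTheory Finset

/-- **Inductive claim for value-ordered instances**: in a value-ordered instance,
for every cut-set `x` and every agent `i`, the total value obtained by agents
`1, …, i` is at least `F i (s i)`, where `s i = ∑ k ≤ i, x k`. -/
theorem value_ordered_prefix_bound (n : ℕ) (hn : 1 ≤ n) (f : Fin n → ℝ → ℝ)
    (hint : ∀ i, IntegrableOn (f i) (Set.Icc 0 1))
    (hord : ∀ (i : ℕ) (hi : i + 1 < n), ∀ t ∈ Set.Icc (0:ℝ) 1,
      (∫ z in (0:ℝ)..t, f ⟨i + 1, hi⟩ z) ≤ ∫ z in (0:ℝ)..t, f ⟨i, Nat.lt_of_succ_lt hi⟩ z)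
    (x : Fin n → ℝ) (hx : x ∈ stdSimplex ℝ (Fin n)) (i : Fin n) :
    (∫ z in (0:ℝ)..(∑ k ∈ Finset.Iic i, x k), f i z) ≤
      ∑ j ∈ Finset.Iic i,
        ∫ z in (∑ k ∈ Finset.Iio j, x k)..(∑ k ∈ Finset.Iic j, x k), f j z := by
  obtain ⟨hx0, hx1⟩ := hx
  -- any prefix-type sum lies in [0,1]
  have hmem : ∀ t : Finset (Fin n), (∑ k ∈ t, x k) ∈ Set.Icc (0:ℝ) 1 := by
    intro t
    constructor
    · exact Finset.sum_nonneg fun k _ => hx0 k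
    · calc ∑ k ∈ t, x k ≤ ∑ k ∈ Finset.univ, x k :=
            Finset.sum_le_sum_of_subset_of_nonneg (Finset.subset_univ t)
              (fun k _ _ => hx0 k)
        _ = 1 := hx1
  have hInt : ∀ (j : Fin n) (a b : ℝ), a ∈ Set.Icc (0:ℝ) 1 → b ∈ Set.Icc (0:ℝ) 1 →
      IntervalIntegrable (f j) volume a b := by
    intro j a b ha hb
    apply IntegrableOn.intervalIntegrable
    apply (hint j).mono_set
    rw [show Set.Icc (0:ℝ) 1 = Set.uIcc 0 1 from (Set.uIcc_of_le zero_le_one).symm]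
    exact Set.uIcc_subset_uIcc (by rwa [Set.uIcc_of_le zero_le_one])
      (by rwa [Set.uIcc_of_le zero_le_one])
  obtain ⟨i, hi⟩ := i
  induction i with
  | zero =>
      have h1 : Finset.Iic (⟨0, hi⟩ : Fin n) = {⟨0, hi⟩} := by
        ext k; simp [Fin.le_def, Fin.ext_iff, Nat.le_zero]
      have h2 : Finset.Iio (⟨0, hi⟩ : Fin n) = ∅ := by
        ext k; simp [Fin.lt_def]
      simp [h1, h2]
  | succ i ih =>
      have hi' : i < n := Nat.lt_of_succ_lt hi
      have hIic : Finset.Iic (⟨i + 1, hi⟩ : Fin n)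
          = insert ⟨i + 1, hi⟩ (Finset.Iic (⟨i, hi'⟩ : Fin n)) := by
        ext k; simp [Fin.le_def, Fin.ext_iff]; omega
      have hIio : Finset.Iio (⟨i + 1, hi⟩ : Fin n) = Finset.Iic (⟨i, hi'⟩ : Fin n) := by
        ext k; simp [Fin.lt_def, Fin.le_def]
      have hnot : (⟨i + 1, hi⟩ : Fin n) ∉ Finset.Iic (⟨i, hi'⟩ : Fin n) := by
        simp [Fin.le_def]
      set a := ∑ k ∈ Finset.Iic (⟨i, hi'⟩ : Fin n), x k with ha
      have hb : ∑ k ∈ Finset.Iic (⟨i + 1, hi⟩ : Fin n), x k = x ⟨i + 1, hi⟩ + a := by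
        rw [hIic, Finset.sum_insert hnot]
      have hamem := hmem (Finset.Iic (⟨i, hi'⟩ : Fin n))
      have hbmem := hmem (Finset.Iic (⟨i + 1, hi⟩ : Fin n))
      rw [hb] at hbmem
      have hR : (∑ j ∈ Finset.Iic (⟨i + 1, hi⟩ : Fin n),
            ∫ z in (∑ k ∈ Finset.Iio j, x k)..(∑ k ∈ Finset.Iic j, x k), f j z)
          = (∫ z in a..(x ⟨i + 1, hi⟩ + a), f ⟨i + 1, hi⟩ z)
            + ∑ j ∈ Finset.Iic (⟨i, hi'⟩ : Fin n),
                ∫ z in (∑ k ∈ Finset.Iio j, x k)..(∑ k ∈ Finset.Iic j, x k), f j z := by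
        rw [hIic, Finset.sum_insert hnot, hb, hIio]
      rw [hb, hR]
      have hsplit : (∫ z in (0:ℝ)..a, f ⟨i + 1, hi⟩ z)
            + (∫ z in a..(x ⟨i + 1, hi⟩ + a), f ⟨i + 1, hi⟩ z)
          = ∫ z in (0:ℝ)..(x ⟨i + 1, hi⟩ + a), f ⟨i + 1, hi⟩ z :=
        intervalIntegral.integral_add_adjacent_intervals
          (hInt _ _ _ (Set.mem_Icc.mpr ⟨le_refl 0, zero_le_one⟩) hamem)
          (hInt _ _ _ hamem hbmem)
      rw [← hsplit]
      have h1 : (∫ z in (0:ℝ)..a, f ⟨i + 1, hi⟩ z) ≤ ∫ z in (0:ℝ)..a, f ⟨i, hi'⟩ z :=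
        hord i hi a hamem
      have h2 := ih hi'
      linarith
end

section
/- Let f : ℝ → ℝ be integrable on [0,1], let 0 ≤ l ≤ r ≤ 1 be such that f(z) ≤ 0 for z ∈ [0,l) ∪ (r,1] and f(z) ≥ 0 for z ∈ [l,r], and suppose F(1) ≥ 0 where F(t) = ∫_0^t f(z) dz. Then there exists θ ∈ [l,r] such that F(θ) = 0, F(z) ≤ 0 for all z ∈ [0,θ], and F(z) ≥ 0 for all z ∈ [θ,1]. -/
open MeasureTheory

/-- **Threshold for a split-cake density**: if `f` is nonpositive on `[0,l) ∪ (r,1]`,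
nonnegative on `[l,r]`, and has nonnegative total value, then there is a threshold
`θ ∈ [l,r]` at which the cdf vanishes, with the cdf nonpositive before `θ` and
nonnegative after `θ`. -/
theorem split_cake_threshold (f : ℝ → ℝ)
    (hint : IntegrableOn f (Set.Icc 0 1))
    (l r : ℝ) (hl : 0 ≤ l) (hlr : l ≤ r) (hr : r ≤ 1)
    (hneg : ∀ z, z ∈ Set.Ico 0 l ∪ Set.Ioc r 1 → f z ≤ 0)
    (hpos : ∀ z ∈ Set.Icc l r, 0 ≤ f z)
    (hcake : 0 ≤ ∫ z in (0:ℝ)..1, f z) :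
    ∃ θ ∈ Set.Icc l r, (∫ z in (0:ℝ)..θ, f z) = 0 ∧
      (∀ z ∈ Set.Icc (0:ℝ) θ, (∫ t in (0:ℝ)..z, f t) ≤ 0) ∧
      (∀ z ∈ Set.Icc θ 1, 0 ≤ ∫ t in (0:ℝ)..z, f t) := by
  set F : ℝ → ℝ := fun t => ∫ z in (0:ℝ)..t, f z with hF
  have hii : ∀ a b : ℝ, a ∈ Set.Icc (0:ℝ) 1 → b ∈ Set.Icc (0:ℝ) 1 →
      IntervalIntegrable f volume a b := by
    intro a b ha hb
    exact (hint.mono_set (Set.uIcc_subset_Icc ha hb)).intervalIntegrable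
  have hsplit : ∀ a b : ℝ, a ∈ Set.Icc (0:ℝ) 1 → b ∈ Set.Icc (0:ℝ) 1 →
      F b = F a + ∫ z in a..b, f z := by
    intro a b ha hb
    have h := intervalIntegral.integral_add_adjacent_intervals
      (hii 0 a (by norm_num) ha) (hii a b ha hb)
    rw [hF]
    dsimp only
    linarith [h]
  -- F is monotone decreasing on [0,l]
  have hdec1 : ∀ a b : ℝ, 0 ≤ a → a ≤ b → b ≤ l → F b ≤ F a := by
    intro a b ha hab hbl
    have ham : a ∈ Set.Icc (0:ℝ) 1 := ⟨ha, (hab.trans hbl).trans (hlr.trans hr)⟩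
    have hbm : b ∈ Set.Icc (0:ℝ) 1 := ⟨ha.trans hab, hbl.trans (hlr.trans hr)⟩
    rw [hsplit a b ham hbm]
    have hne : ∀ᵐ u : ℝ ∂volume, u ≠ l := by
      rw [ae_iff]
      simpa using measure_singleton l
    have h1 : 0 ≤ ∫ z in a..b, -f z := by
      apply intervalIntegral.integral_nonneg_of_ae_restrict hab
      rw [Filter.EventuallyLE, ae_restrict_iff' measurableSet_Icc]
      filter_upwards [hne] with u hu hmem
      have : f u ≤ 0 :=
        hneg u (Or.inl ⟨ha.trans hmem.1, lt_of_le_of_ne (hmem.2.trans hbl) hu⟩)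
      simp only [Pi.zero_apply]; linarith
    rw [intervalIntegral.integral_neg] at h1
    linarith
  -- F is monotone increasing on [l,r]
  have hinc : ∀ a b : ℝ, l ≤ a → a ≤ b → b ≤ r → F a ≤ F b := by
    intro a b ha hab hbr
    have ham : a ∈ Set.Icc (0:ℝ) 1 := ⟨hl.trans ha, (hab.trans hbr).trans hr⟩
    have hbm : b ∈ Set.Icc (0:ℝ) 1 := ⟨hl.trans (ha.trans hab), hbr.trans hr⟩
    rw [hsplit a b ham hbm]
    have : 0 ≤ ∫ z in a..b, f z := by
      apply intervalIntegral.integral_nonneg hab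
      intro u hu
      exact hpos u ⟨ha.trans hu.1, hu.2.trans hbr⟩
    linarith
  -- F is monotone decreasing on [r,1]
  have hdec2 : ∀ a b : ℝ, r ≤ a → a ≤ b → b ≤ 1 → F b ≤ F a := by
    intro a b ha hab hb1
    have ham : a ∈ Set.Icc (0:ℝ) 1 := ⟨(hl.trans hlr).trans ha, hab.trans hb1⟩
    have hbm : b ∈ Set.Icc (0:ℝ) 1 := ⟨(hl.trans hlr).trans (ha.trans hab), hb1⟩
    rw [hsplit a b ham hbm]
    have hne : ∀ᵐ u : ℝ ∂volume, u ≠ r := by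
      rw [ae_iff]
      simpa using measure_singleton r
    have h1 : 0 ≤ ∫ z in a..b, -f z := by
      apply intervalIntegral.integral_nonneg_of_ae_restrict hab
      rw [Filter.EventuallyLE, ae_restrict_iff' measurableSet_Icc]
      filter_upwards [hne] with u hu hmem
      have hru : r < u := lt_of_le_of_ne (ha.trans hmem.1) (Ne.symm hu)
      have : f u ≤ 0 := hneg u (Or.inr ⟨hru, hmem.2.trans hb1⟩)
      simp only [Pi.zero_apply]; linarith
    rw [intervalIntegral.integral_neg] at h1
    linarith
  have hF0 : F 0 = 0 := by simp [hF]
  have hFl : F l ≤ 0 := hF0 ▸ hdec1 0 l le_rfl hl le_rfl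
  have hFr : 0 ≤ F r := le_trans hcake (hdec2 r 1 le_rfl hr le_rfl)
  -- continuity of F on [l,r]
  have hcont : ContinuousOn F (Set.Icc l r) := by
    have h01 : ContinuousOn F (Set.uIcc (0:ℝ) 1) :=
      intervalIntegral.continuousOn_primitive_interval'
        (hii 0 1 (by norm_num) (by norm_num))
        (by rw [Set.uIcc_of_le zero_le_one]; exact ⟨le_rfl, zero_le_one⟩)
    refine h01.mono ?_
    rw [Set.uIcc_of_le zero_le_one]
    exact Set.Icc_subset_Icc hl hr
  obtain ⟨θ, hθmem, hθ⟩ := intermediate_value_Icc hlr hcont ⟨hFl, hFr⟩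
  refine ⟨θ, hθmem, hθ, ?_, ?_⟩
  · intro z hz
    rcases le_or_gt z l with h | h
    · have h2 := hdec1 0 z le_rfl hz.1 h
      rwa [hF0] at h2
    · have h2 := hinc z θ h.le hz.2 hθmem.2
      rwa [hθ] at h2
  · intro z hz
    rcases le_or_gt z r with h | h
    · have h2 := hinc θ z hθmem.1 hz.1 h
      rwa [hθ] at h2
    · exact le_trans hcake (hdec2 z 1 h.le hz.2 le_rfl)
end

section
/- Let n ≥ 1 and let f : Fin n → ℝ → ℝ be integrable densities on [0,1] with cdfs F_i(t) = ∫_0^t f_i(z) dz, and suppose for each agent i there is a threshold θ_i ∈ [0,1] with F_i(z) ≤ 0 for z ≤ θ_i and F_i(z) ≥ 0 for z ≥ θ_i, and that the agents are ordered so that θ_1 ≤ θ_2 ≤ ⋯ ≤ θ_n. Then for every cut-set x in the standard (n−1)-simplex there exists an agent i with x_i > 0 whose piece [s_{i−1}, s_i] (where s_k = x_1 + ⋯ + x_k) contains θ_i; consequently that agent's value ∫_{s_{i−1}}^{s_i} f_i(z) dz = F_i(s_i) − F_i(s_{i−1}) is nonnegative. -/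
open MeasureTheory Finset

/-- **Key step for split-cake instances**: if agents are sorted by thresholds
`θ 1 ≤ … ≤ θ n`, where each cdf `F i` is nonpositive before `θ i` and nonnegative after,
then every cut-set gives some agent a piece of positive length containing its threshold;
consequently that agent's value is nonnegative. -/
theorem threshold_ordered_is_sann (n : ℕ) (hn : 1 ≤ n) (f : Fin n → ℝ → ℝ)
    (hint : ∀ i, IntegrableOn (f i) (Set.Icc 0 1))
    (θ : Fin n → ℝ) (hθ : ∀ i, θ i ∈ Set.Icc (0:ℝ) 1)
    (hbefore : ∀ i, ∀ z ∈ Set.Icc (0:ℝ) 1, z ≤ θ i → (∫ t in (0:ℝ)..z, f i t) ≤ 0)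
    (hafter : ∀ i, ∀ z ∈ Set.Icc (0:ℝ) 1, θ i ≤ z → 0 ≤ ∫ t in (0:ℝ)..z, f i t)
    (hsorted : Monotone θ)
    (x : Fin n → ℝ) (hx : x ∈ stdSimplex ℝ (Fin n)) :
    ∃ i : Fin n, 0 < x i ∧
      θ i ∈ Set.Icc (∑ k ∈ Finset.Iio i, x k) (∑ k ∈ Finset.Iic i, x k) ∧
      0 ≤ ∫ z in (∑ k ∈ Finset.Iio i, x k)..(∑ k ∈ Finset.Iic i, x k), f i z := by
  classical
  have hnn : ∀ k, 0 ≤ x k := fun k => hx.1 k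
  have hsum : ∑ k, x k = 1 := hx.2
  set T : Finset (Fin n) :=
    Finset.univ.filter (fun i => 0 < x i ∧ (∑ k ∈ Finset.Iio i, x k) ≤ θ i) with hT
  have hTne : T.Nonempty := by
    have hex : (Finset.univ.filter (fun i => x i ≠ 0)).Nonempty := by
      by_contra h
      rw [Finset.not_nonempty_iff_eq_empty, Finset.filter_eq_empty_iff] at h
      have : ∑ k, x k = 0 := Finset.sum_eq_zero fun i hi => not_not.mp (h hi)
      rw [hsum] at this; norm_num at this
    set m := (Finset.univ.filter (fun i => x i ≠ 0)).min' hex with hm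
    have hmmem := Finset.mem_filter.mp (Finset.min'_mem (Finset.univ.filter (fun i => x i ≠ 0)) hex)
    refine ⟨m, ?_⟩
    rw [hT, Finset.mem_filter]
    refine ⟨Finset.mem_univ _, lt_of_le_of_ne (hnn m) (Ne.symm hmmem.2), ?_⟩
    have hzero : ∑ k ∈ Finset.Iio m, x k = 0 := by
      refine Finset.sum_eq_zero fun i hi => ?_
      rw [Finset.mem_Iio] at hi
      by_contra hne
      have := Finset.min'_le (Finset.univ.filter (fun i => x i ≠ 0)) i
        (Finset.mem_filter.mpr ⟨Finset.mem_univ _, hne⟩)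
      exact absurd hi (not_lt.2 this)
    rw [hzero]; exact (hθ m).1
  set j := T.max' hTne with hj
  obtain ⟨-, hxj, hajθ⟩ := Finset.mem_filter.mp (Finset.max'_mem T hTne)
  have hIic : ∑ k ∈ Finset.Iic j, x k = ∑ k ∈ Finset.Iio j, x k + x j := by
    rw [← Finset.Iio_insert, Finset.sum_insert (by simp), add_comm]
  have ha0 : 0 ≤ ∑ k ∈ Finset.Iio j, x k :=
    Finset.sum_nonneg fun i _ => hnn i
  have hb1 : ∑ k ∈ Finset.Iic j, x k ≤ 1 := by
    rw [← hsum]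
    exact Finset.sum_le_sum_of_subset_of_nonneg (Finset.subset_univ _) fun i _ _ => hnn i
  have hab : (∑ k ∈ Finset.Iio j, x k) ≤ ∑ k ∈ Finset.Iic j, x k := by
    rw [hIic]; linarith
  -- Key: θ j ≤ S j
  have hθb : θ j ≤ ∑ k ∈ Finset.Iic j, x k := by
    by_contra hlt
    push_neg at hlt
    -- there is some i > j with x i ≠ 0
    have hex2 : (Finset.univ.filter (fun i => j < i ∧ x i ≠ 0)).Nonempty := by
      by_contra h
      rw [Finset.not_nonempty_iff_eq_empty, Finset.filter_eq_empty_iff] at h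
      have heq : ∑ k ∈ Finset.Iic j, x k = ∑ k, x k := by
        refine Finset.sum_subset (Finset.subset_univ _) fun i hi hni => ?_
        rw [Finset.mem_Iic] at hni
        have := h (Finset.mem_univ i)
        push_neg at this
        exact this (lt_of_not_ge hni)
      rw [heq, hsum] at hlt
      exact absurd (hθ j).2 (not_le.2 hlt)
    set k := (Finset.univ.filter (fun i => j < i ∧ x i ≠ 0)).min' hex2 with hk
    obtain ⟨-, hjk, hxk⟩ := Finset.mem_filter.mp
      (Finset.min'_mem (Finset.univ.filter (fun i => j < i ∧ x i ≠ 0)) hex2)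
    have key : ∑ p ∈ Finset.Iio k, x p = ∑ p ∈ Finset.Iic j, x p := by
      refine (Finset.sum_subset ?_ ?_).symm
      · intro i hi
        rw [Finset.mem_Iic] at hi; rw [Finset.mem_Iio]
        exact lt_of_le_of_lt hi hjk
      · intro i hi hni
        rw [Finset.mem_Iio] at hi; rw [Finset.mem_Iic] at hni
        by_contra hne
        have := Finset.min'_le (Finset.univ.filter (fun i => j < i ∧ x i ≠ 0)) i
          (Finset.mem_filter.mpr ⟨Finset.mem_univ _, lt_of_not_ge hni, hne⟩)
        exact absurd hi (not_lt.2 (hk ▸ this))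
    have hkT : k ∈ T := by
      rw [hT, Finset.mem_filter]
      refine ⟨Finset.mem_univ _, lt_of_le_of_ne (hnn k) (Ne.symm hxk), ?_⟩
      rw [key]
      exact le_trans hlt.le (hsorted hjk.le)
    exact absurd hjk (not_lt.2 (Finset.le_max' T k hkT))
  have haθ : (∑ k ∈ Finset.Iio j, x k) ≤ θ j := hajθ
  refine ⟨j, hxj, ⟨haθ, hθb⟩, ?_⟩
  -- integral part
  set a := ∑ k ∈ Finset.Iio j, x k with hadef
  set b := ∑ k ∈ Finset.Iic j, x k with hbdef
  have haI : a ∈ Set.Icc (0:ℝ) 1 := ⟨ha0, le_trans hab hb1⟩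
  have hbI : b ∈ Set.Icc (0:ℝ) 1 := ⟨le_trans ha0 hab, hb1⟩
  have i1 : IntervalIntegrable (f j) volume 0 a := by
    refine ((hint j).mono_set ?_).intervalIntegrable
    rw [Set.uIcc_of_le haI.1]
    exact Set.Icc_subset_Icc le_rfl haI.2
  have i2 : IntervalIntegrable (f j) volume a b := by
    refine ((hint j).mono_set ?_).intervalIntegrable
    rw [Set.uIcc_of_le hab]
    exact Set.Icc_subset_Icc haI.1 hbI.2
  have hadd := intervalIntegral.integral_add_adjacent_intervals i1 i2
  have hA : (∫ t in (0:ℝ)..a, f j t) ≤ 0 := hbefore j a haI haθ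
  have hB : 0 ≤ ∫ t in (0:ℝ)..b, f j t := hafter j b hbI hθb
  linarith [hadd]
end

section
/- Let n ≥ 1 and let f : Fin n → ℝ → ℝ be split-cake densities: each f_i is integrable on [0,1], there exist 0 ≤ l_i ≤ r_i ≤ 1 with f_i(z) ≤ 0 for z ∈ [0,l_i) ∪ (r_i,1] and f_i(z) ≥ 0 for z ∈ [l_i, r_i], and ∫_0^1 f_i(z) dz ≥ 0. Then there exists a permutation σ of Fin n such that for every cut-set x in the standard (n−1)-simplex there is an index i with x_i > 0 and ∫_{s_{i−1}}^{s_i} f_{σ(i)}(z) dz ≥ 0, where s_k = x_1 + ⋯ + x_k; i.e., every split-cake instance admits a SANN permutation. -/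
open MeasureTheory Finset

lemma intervalIntegrable_of_Icc01 (f : ℝ → ℝ) (hint : IntegrableOn f (Set.Icc 0 1))
    {u v : ℝ} (hu : 0 ≤ u) (hv : v ≤ 1) (huv : u ≤ v) :
    IntervalIntegrable f volume u v := by
  apply MeasureTheory.IntegrableOn.intervalIntegrable
  rw [Set.uIcc_of_le huv]
  exact hint.mono_set (Set.Icc_subset_Icc hu hv)

lemma exists_crossing (f : ℝ → ℝ) (hint : IntegrableOn f (Set.Icc 0 1))
    {l r : ℝ} (hl : 0 ≤ l) (hlr : l ≤ r) (hr : r ≤ 1)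
    (hneg : ∀ z, z ∈ Set.Ico 0 l ∪ Set.Ioc r 1 → f z ≤ 0)
    (hpos : ∀ z ∈ Set.Icc l r, 0 ≤ f z)
    (hcake : 0 ≤ ∫ z in (0:ℝ)..1, f z) :
    ∃ a, 0 ≤ a ∧ a ≤ 1 ∧
      (∀ t, 0 ≤ t → t < a → (∫ z in (0:ℝ)..t, f z) ≤ 0) ∧
      (∀ t, a ≤ t → t ≤ 1 → 0 ≤ ∫ z in (0:ℝ)..t, f z) := by
  have hII : ∀ u v : ℝ, 0 ≤ u → v ≤ 1 → u ≤ v → IntervalIntegrable f volume u v :=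
    fun u v hu hv huv => intervalIntegrable_of_Icc01 f hint hu hv huv
  have hg_cont : ContinuousOn (fun t => ∫ z in (0:ℝ)..t, f z) (Set.Icc 0 1) := by
    have := intervalIntegral.continuousOn_primitive_interval (a := (0:ℝ)) (b := 1) (μ := volume)
      (f := f) (by rwa [Set.uIcc_of_le (by norm_num : (0:ℝ) ≤ 1)])
    rwa [Set.uIcc_of_le (by norm_num : (0:ℝ) ≤ 1)] at this
  have htail : ∀ t, r ≤ t → t ≤ 1 → (∫ z in t..(1:ℝ), f z) ≤ 0 := by
    intro t hrt ht1
    rw [intervalIntegral.integral_of_le ht1]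
    apply setIntegral_nonpos measurableSet_Ioc
    intro z hz
    exact hneg z (Or.inr ⟨lt_of_le_of_lt hrt hz.1, hz.2⟩)
  have key : ∀ t u, l ≤ t → t ≤ u → u ≤ r → 0 ≤ ∫ z in t..u, f z := by
    intro t u hlt htu hur
    rw [intervalIntegral.integral_of_le htu]
    apply setIntegral_nonneg measurableSet_Ioc
    intro z hz
    exact hpos z ⟨le_of_lt (lt_of_le_of_lt hlt hz.1), hz.2.trans hur⟩
  have hadd : ∀ t u, 0 ≤ t → t ≤ u → u ≤ 1 →
      (∫ z in (0:ℝ)..t, f z) + ∫ z in t..u, f z = ∫ z in (0:ℝ)..u, f z := by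
    intro t u ht htu hu
    exact intervalIntegral.integral_add_adjacent_intervals
      (hII 0 t le_rfl (htu.trans hu) ht) (hII t u ht hu htu)
  have hgr : 0 ≤ ∫ z in (0:ℝ)..r, f z := by
    have h1 := hadd r 1 (hl.trans hlr) hr le_rfl
    have := htail r le_rfl hr
    linarith
  set S : Set ℝ := Set.Icc l r ∩ (fun t => ∫ z in (0:ℝ)..t, f z) ⁻¹' Set.Ici 0 with hS
  have hSsub : S ⊆ Set.Icc l r := Set.inter_subset_left
  have hScpt : IsCompact S := by
    have hclosed : IsClosed S :=
      ContinuousOn.preimage_isClosed_of_isClosed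
        (hg_cont.mono (Set.Icc_subset_Icc hl hr)) isClosed_Icc isClosed_Ici
    exact (isCompact_Icc (a := l) (b := r)).of_isClosed_subset hclosed hSsub
  have hSne : S.Nonempty := ⟨r, ⟨hlr, le_rfl⟩, hgr⟩
  set a := sInf S with ha
  have haS : a ∈ S := hScpt.sInf_mem hSne
  have halr : a ∈ Set.Icc l r := hSsub haS
  refine ⟨a, hl.trans halr.1, halr.2.trans hr, ?_, ?_⟩
  · intro t ht hta
    rcases le_or_gt t l with h | h
    · rw [intervalIntegral.integral_of_le ht, integral_Ioc_eq_integral_Ioo]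
      apply setIntegral_nonpos measurableSet_Ioo
      intro z hz
      exact hneg z (Or.inl ⟨le_of_lt hz.1, lt_of_lt_of_le hz.2 h⟩)
    · by_contra hcon
      push_neg at hcon
      have : t ∈ S := ⟨⟨h.le, hta.le.trans halr.2⟩, hcon.le⟩
      exact absurd (csInf_le hScpt.bddBelow this) (not_le.mpr hta)
  · intro t hat ht1
    rcases le_or_gt t r with h | h
    · have h1 := hadd a t (hl.trans halr.1) hat (h.trans hr)
      have h2 := key a t halr.1 hat h
      have h3 : (0:ℝ) ≤ ∫ z in (0:ℝ)..a, f z := haS.2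
      linarith
    · have h1 := hadd t 1 ((hl.trans hlr).trans h.le) ht1 le_rfl
      have h2 := htail t h.le ht1
      linarith

/-- **Every split-cake instance admits a SANN permutation**: if each density is
nonnegative on an interval `[lᵢ, rᵢ] ⊆ [0,1]`, nonpositive outside it, and has
nonnegative total value, then some ordering of the agents makes the instance SANN. -/
theorem split_cake_admits_sann_permutation (n : ℕ) (hn : 1 ≤ n) (f : Fin n → ℝ → ℝ)
    (hint : ∀ i, IntegrableOn (f i) (Set.Icc 0 1))
    (hsplit : ∀ i, ∃ l r : ℝ, 0 ≤ l ∧ l ≤ r ∧ r ≤ 1 ∧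
      (∀ z, z ∈ Set.Ico 0 l ∪ Set.Ioc r 1 → f i z ≤ 0) ∧
      (∀ z ∈ Set.Icc l r, 0 ≤ f i z))
    (hcake : ∀ i, 0 ≤ ∫ z in (0:ℝ)..1, f i z) :
    ∃ σ : Equiv.Perm (Fin n), ∀ x : Fin n → ℝ, x ∈ stdSimplex ℝ (Fin n) →
      ∃ i : Fin n, 0 < x i ∧
        0 ≤ ∫ z in (∑ k ∈ Finset.Iio i, x k)..(∑ k ∈ Finset.Iic i, x k), f (σ i) z := by
  obtain ⟨m, rfl⟩ : ∃ m, n = m + 1 := ⟨n - 1, (Nat.succ_pred_eq_of_pos hn).symm⟩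
  have hcr : ∀ i, ∃ a, 0 ≤ a ∧ a ≤ 1 ∧
      (∀ t, 0 ≤ t → t < a → (∫ z in (0:ℝ)..t, f i z) ≤ 0) ∧
      (∀ t, a ≤ t → t ≤ 1 → 0 ≤ ∫ z in (0:ℝ)..t, f i z) := by
    intro i
    obtain ⟨l, r, hl, hlr, hr, hneg, hpos⟩ := hsplit i
    exact exists_crossing (f i) (hint i) hl hlr hr hneg hpos (hcake i)
  choose a ha0 ha1 haneg hapos using hcr
  refine ⟨Tuple.sort a, ?_⟩
  intro x hx
  have hmono : Monotone (a ∘ Tuple.sort a) := Tuple.monotone_sort a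
  set σ := Tuple.sort a with hσ
  have hx0 : ∀ i, 0 ≤ x i := hx.1
  have hxs : ∑ i, x i = 1 := hx.2
  set S : Fin (m+1) → ℝ := fun i => ∑ k ∈ Iic i, x k with hSdef
  have hS1 : ∀ i, S i ≤ 1 := by
    intro i; rw [← hxs]
    exact Finset.sum_le_sum_of_subset_of_nonneg (Finset.subset_univ _) (fun j _ _ => hx0 j)
  set T : Finset (Fin (m+1)) := Finset.univ.filter (fun i => 0 < S i ∧ a (σ i) ≤ S i) with hT
  have hTne : T.Nonempty := by
    refine ⟨Fin.last m, ?_⟩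
    have hlast : S (Fin.last m) = 1 := by
      rw [hSdef, ← hxs]
      apply Finset.sum_congr _ (fun _ _ => rfl)
      ext k; simp [Fin.le_last]
    simp only [hT, Finset.mem_filter, Finset.mem_univ, true_and]
    rw [hlast]; exact ⟨one_pos, ha1 _⟩
  set i := T.min' hTne with hi
  have hiT : i ∈ T := T.min'_mem hTne
  rw [hT, Finset.mem_filter] at hiT
  obtain ⟨-, hSpos, hai⟩ := hiT
  set u : ℝ := ∑ k ∈ Iio i, x k with hu
  have hu0 : 0 ≤ u := Finset.sum_nonneg fun j _ => hx0 j
  have hSu : S i = x i + u := by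
    rw [hSdef]
    simp only
    rw [← Finset.Iio_insert, Finset.sum_insert (by simp)]
  have hcase : u = 0 ∨ u < a (σ i) := by
    rcases eq_or_lt_of_le hu0 with h | h
    · exact Or.inl h.symm
    · right
      have hi0 : i ≠ 0 := by
        intro h0
        have he : Finset.Iio i = ∅ := by
          rw [h0]; ext k; simp [Fin.lt_def]
        rw [hu, he, Finset.sum_empty] at h
        exact lt_irrefl _ h
      have hival : (i : ℕ) ≠ 0 := fun hc => hi0 (Fin.ext (by simp [hc]))
      set j : Fin (m + 1) := ⟨(i : ℕ) - 1, by omega⟩ with hj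
      have hjval : (j : ℕ) = (i : ℕ) - 1 := rfl
      have hji : j < i := by
        rw [Fin.lt_def, hjval]; omega
      have hIio : Finset.Iio i = Finset.Iic j := by
        ext k
        simp only [Finset.mem_Iio, Finset.mem_Iic, Fin.lt_def, Fin.le_def, hjval]
        omega
      have hSj : S j = u := by rw [hSdef, hu]; simp only [hIio]
      have hjT : j ∉ T := by
        intro hjT
        exact absurd (T.min'_le j hjT) (not_le.mpr hji)
      rw [hT, Finset.mem_filter] at hjT
      push_neg at hjT
      have h2 : S j < a (σ j) := hjT (Finset.mem_univ j) (by rw [hSj]; exact h)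
      calc u = S j := hSj.symm
        _ < a (σ j) := h2
        _ ≤ a (σ i) := hmono hji.le
  have huS : u ≤ S i := by
    rw [hSu]; linarith [hx0 i]
  have hxi : 0 < x i := by
    rcases hcase with h | h
    · rw [h, add_zero] at hSu; rw [← hSu]; exact hSpos
    · have : u < S i := lt_of_lt_of_le h hai
      rw [hSu] at this; linarith
  refine ⟨i, hxi, ?_⟩
  have hgu : (∫ z in (0:ℝ)..u, f (σ i) z) ≤ 0 := by
    rcases hcase with h | h
    · rw [h, intervalIntegral.integral_same]
    · exact haneg (σ i) u hu0 h
  have hgS : 0 ≤ ∫ z in (0:ℝ)..(S i), f (σ i) z := hapos (σ i) (S i) hai (hS1 i)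
  have hsub : (∫ z in (0:ℝ)..(S i), f (σ i) z) - (∫ z in (0:ℝ)..u, f (σ i) z)
      = ∫ z in u..(S i), f (σ i) z :=
    intervalIntegral.integral_interval_sub_left
      (intervalIntegrable_of_Icc01 _ (hint (σ i)) le_rfl (hS1 i) ((hu0.trans huS)))
      (intervalIntegrable_of_Icc01 _ (hint (σ i)) le_rfl (huS.trans (hS1 i)) hu0)
  show 0 ≤ ∫ z in u..(S i), f (σ i) z
  linarith
end

section
/- Let n ≥ 1 and let f : Fin n → ℝ → ℝ be single-peaked densities: each f_i is integrable on [0,1], there exists p_i ∈ [0,1] such that f_i is monotone nondecreasing on [0,p_i] and monotone nonincreasing on [p_i,1], and ∫_0^1 f_i(z) dz ≥ 0. Then there exists a permutation σ of Fin n such that for every cut-set x in the standard (n−1)-simplex there is an index i with x_i > 0 and ∫_{s_{i−1}}^{s_i} f_{σ(i)}(z) dz ≥ 0, where s_k = x_1 + ⋯ + x_k; i.e., every single-peaked instance admits a SANN permutation. -/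
open MeasureTheory Finset

private lemma sann_intInt (f : ℝ → ℝ) (hint : IntegrableOn f (Set.Icc 0 1))
    {a b : ℝ} (ha : 0 ≤ a) (hab : a ≤ b) (hb : b ≤ 1) :
    IntervalIntegrable f volume a b := by
  apply (hint.mono_set ?_).intervalIntegrable
  rw [Set.uIcc_of_le hab]
  exact Set.Icc_subset_Icc ha hb

/-- If a single-peaked density with nonnegative total has a strictly positive prefix value
at `u`, then every later prefix value is nonnegative. -/
private lemma sann_lemA (f : ℝ → ℝ) (hint : IntegrableOn f (Set.Icc 0 1))
    {p : ℝ} (hp0 : 0 ≤ p) (hp1 : p ≤ 1)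
    (hmono : MonotoneOn f (Set.Icc 0 p)) (hanti : AntitoneOn f (Set.Icc p 1))
    (htot : 0 ≤ ∫ z in (0:ℝ)..1, f z)
    {u t : ℝ} (hu0 : 0 ≤ u) (hut : u < t) (ht1 : t ≤ 1)
    (hG : 0 < ∫ z in (0:ℝ)..u, f z) : 0 ≤ ∫ z in (0:ℝ)..t, f z := by
  have hu1 : u ≤ 1 := le_trans hut.le ht1
  have ht0 : 0 ≤ t := le_trans hu0 hut.le
  have hupos : 0 < u := by
    rcases hu0.lt_or_eq with h | h
    · exact h
    · exfalso; rw [← h] at hG; simp at hG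
  have hIua : IntervalIntegrable f volume 0 u := sann_intInt f hint le_rfl hu0 hu1
  have hIut : IntervalIntegrable f volume u t := sann_intInt f hint hu0 hut.le ht1
  have hI0t : IntervalIntegrable f volume 0 t := sann_intInt f hint le_rfl ht0 ht1
  have hIt1 : IntervalIntegrable f volume t 1 := sann_intInt f hint ht0 ht1 le_rfl
  have hsplit : (∫ z in (0:ℝ)..u, f z) + (∫ z in u..t, f z) = ∫ z in (0:ℝ)..t, f z :=
    intervalIntegral.integral_add_adjacent_intervals hIua hIut
  have hsplit1 : (∫ z in (0:ℝ)..t, f z) + (∫ z in t..1, f z) = ∫ z in (0:ℝ)..1, f z :=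
    intervalIntegral.integral_add_adjacent_intervals hI0t hIt1
  -- helper : tail from t is nonpositive provided f t < 0 and p ≤ t
  have tail_nonpos : p ≤ t → f t < 0 → (∫ z in t..1, f z) ≤ 0 := by
    intro hpt hft
    have h1 : (∫ z in t..1, f z) ≤ ∫ z in t..1, f t := by
      apply intervalIntegral.integral_mono_on ht1 hIt1 intervalIntegrable_const
      intro x hx
      exact hanti ⟨hpt, ht1⟩ ⟨le_trans hpt hx.1, hx.2⟩ hx.1
    have h2 : (∫ z in t..1, f t) = (1 - t) * f t := by
      rw [intervalIntegral.integral_const]; simp [smul_eq_mul]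
    nlinarith [mul_nonpos_of_nonneg_of_nonpos (sub_nonneg.2 ht1) hft.le]
  by_cases hmid : 0 ≤ ∫ z in u..t, f z
  · linarith
  push_neg at hmid
  by_cases htp : t ≤ p
  · -- entire [u,t] in monotone region : impossible since prefix positive forces f u > 0
    exfalso
    have hup : u ≤ p := le_trans hut.le htp
    have h1 : (∫ z in (0:ℝ)..u, f z) ≤ u * f u := by
      have : (∫ z in (0:ℝ)..u, f z) ≤ ∫ z in (0:ℝ)..u, f u := by
        apply intervalIntegral.integral_mono_on hu0 hIua intervalIntegrable_const
        intro x hx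
        exact hmono ⟨hx.1, le_trans hx.2 hup⟩ ⟨hu0, hup⟩ hx.2
      rw [intervalIntegral.integral_const] at this
      simpa [smul_eq_mul] using this
    have hfu : 0 < f u := by nlinarith
    have h2 : (t - u) * f u ≤ ∫ z in u..t, f z := by
      have : (∫ z in u..t, f u) ≤ ∫ z in u..t, f z := by
        apply intervalIntegral.integral_mono_on hut.le intervalIntegrable_const hIut
        intro x hx
        exact hmono ⟨hu0, hup⟩ ⟨le_trans hu0 hx.1, le_trans hx.2 htp⟩ hx.1
      rw [intervalIntegral.integral_const] at this
      simpa [smul_eq_mul] using this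
    nlinarith
  push_neg at htp
  by_cases hpu : p ≤ u
  · -- [u,t] in antitone region
    have h2 : (t - u) * f t ≤ ∫ z in u..t, f z := by
      have : (∫ z in u..t, f t) ≤ ∫ z in u..t, f z := by
        apply intervalIntegral.integral_mono_on hut.le intervalIntegrable_const hIut
        intro x hx
        exact hanti ⟨le_trans hpu hx.1, le_trans hx.2 ht1⟩ ⟨hpu.trans hut.le, ht1⟩ hx.2
      rw [intervalIntegral.integral_const] at this
      simpa [smul_eq_mul] using this
    have hft : f t < 0 := by nlinarith
    have := tail_nonpos (le_trans hpu hut.le) hft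
    linarith
  push_neg at hpu
  -- u < p < t
  have hIup : IntervalIntegrable f volume u p := sann_intInt f hint hu0 hpu.le hp1
  have hIpt : IntervalIntegrable f volume p t := sann_intInt f hint hp0 htp.le ht1
  have hsplit2 : (∫ z in u..p, f z) + (∫ z in p..t, f z) = ∫ z in u..t, f z :=
    intervalIntegral.integral_add_adjacent_intervals hIup hIpt
  by_cases hL : (∫ z in u..p, f z) < 0
  · exfalso
    have h1 : (p - u) * f u ≤ ∫ z in u..p, f z := by
      have : (∫ z in u..p, f u) ≤ ∫ z in u..p, f z := by
        apply intervalIntegral.integral_mono_on hpu.le intervalIntegrable_const hIup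
        intro x hx
        exact hmono ⟨hu0, hpu.le⟩ ⟨le_trans hu0 hx.1, hx.2⟩ hx.1
      rw [intervalIntegral.integral_const] at this
      simpa [smul_eq_mul] using this
    have hfu : f u < 0 := by nlinarith
    have h2 : (∫ z in (0:ℝ)..u, f z) ≤ u * f u := by
      have : (∫ z in (0:ℝ)..u, f z) ≤ ∫ z in (0:ℝ)..u, f u := by
        apply intervalIntegral.integral_mono_on hu0 hIua intervalIntegrable_const
        intro x hx
        exact hmono ⟨hx.1, le_trans hx.2 hpu.le⟩ ⟨hu0, hpu.le⟩ hx.2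
      rw [intervalIntegral.integral_const] at this
      simpa [smul_eq_mul] using this
    nlinarith
  push_neg at hL
  have hR : (∫ z in p..t, f z) < 0 := by linarith
  have h2 : (t - p) * f t ≤ ∫ z in p..t, f z := by
    have : (∫ z in p..t, f t) ≤ ∫ z in p..t, f z := by
      apply intervalIntegral.integral_mono_on htp.le intervalIntegrable_const hIpt
      intro x hx
      exact hanti ⟨hx.1, le_trans hx.2 ht1⟩ ⟨htp.le, ht1⟩ hx.2
    rw [intervalIntegral.integral_const] at this
    simpa [smul_eq_mul] using this
  have hft : f t < 0 := by nlinarith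
  have := tail_nonpos htp.le hft
  linarith

/-- Every single-peaked density with nonnegative total admits a switch point `z`:
all prefix values up to `z` are nonpositive, and all prefix values from `z` on
are nonnegative. -/
private lemma sann_exists_z (f : ℝ → ℝ) (hint : IntegrableOn f (Set.Icc 0 1))
    (hpeak : ∃ p ∈ Set.Icc (0:ℝ) 1, MonotoneOn f (Set.Icc 0 p) ∧ AntitoneOn f (Set.Icc p 1))
    (htot : 0 ≤ ∫ z in (0:ℝ)..1, f z) :
    ∃ z, (0 ≤ z ∧ z ≤ 1) ∧
      (∀ u, 0 ≤ u → u ≤ z → (∫ s in (0:ℝ)..u, f s) ≤ 0) ∧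
      (∀ v, z ≤ v → v ≤ 1 → 0 ≤ ∫ s in (0:ℝ)..v, f s) := by
  obtain ⟨p, ⟨hp0, hp1⟩, hmono, hanti⟩ := hpeak
  set G : ℝ → ℝ := fun t => ∫ s in (0:ℝ)..t, f s with hGdef
  have contG : ContinuousOn G (Set.Icc 0 1) := by
    have : ContinuousOn (fun t => ∫ s in (0:ℝ)..t, f s) (Set.uIcc 0 1) := by
      apply intervalIntegral.continuousOn_primitive_interval
      rwa [Set.uIcc_of_le (zero_le_one)]
    rwa [Set.uIcc_of_le (zero_le_one)] at this
  set S : Set ℝ := insert (0:ℝ) {t | (0 ≤ t ∧ t ≤ 1) ∧ G t < 0} with hSdef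
  have hSne : S.Nonempty := ⟨0, Set.mem_insert _ _⟩
  have hSbdd : BddAbove S := by
    refine ⟨1, ?_⟩
    rintro t (rfl | ⟨⟨_, ht1⟩, _⟩)
    · exact zero_le_one
    · exact ht1
  set z : ℝ := sSup S with hzdef
  have hz0 : 0 ≤ z := le_csSup hSbdd (Set.mem_insert _ _)
  have hz1 : z ≤ 1 := by
    apply csSup_le hSne
    rintro t (rfl | ⟨⟨_, ht1⟩, _⟩)
    · exact zero_le_one
    · exact ht1
  have claim_lt : ∀ u, 0 ≤ u → u < z → G u ≤ 0 := by
    intro u hu0 huz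
    by_contra hpos
    push_neg at hpos
    obtain ⟨t, htS, hut⟩ := exists_lt_of_lt_csSup hSne huz
    rcases htS with rfl | ⟨⟨ht0, ht1⟩, hGt⟩
    · exact absurd hut (not_lt.2 hu0)
    · exact absurd (sann_lemA f hint hp0 hp1 hmono hanti htot hu0 hut ht1 hpos) (not_le.2 hGt)
  have claim_gt : ∀ v, z < v → v ≤ 1 → 0 ≤ G v := by
    intro v hzv hv1
    by_contra hneg
    push_neg at hneg
    have hvS : v ∈ S := Set.mem_insert_of_mem _ ⟨⟨le_trans hz0 hzv.le, hv1⟩, hneg⟩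
    exact absurd (le_csSup hSbdd hvS) (not_le.2 hzv)
  refine ⟨z, ⟨hz0, hz1⟩, ?_, ?_⟩
  · intro u hu0 huz
    rcases huz.lt_or_eq with h | h
    · exact claim_lt u hu0 h
    · rw [h]
      rcases hz0.lt_or_eq with h0z | h0z
      · -- approach z from the left
        have cw : ContinuousWithinAt G (Set.Ico 0 z) z :=
          (contG z ⟨hz0, hz1⟩).mono (fun x hx => ⟨hx.1, le_trans hx.2.le hz1⟩)
        haveI : (nhdsWithin z (Set.Ico 0 z)).NeBot := right_nhdsWithin_Ico_neBot h0z
        apply le_of_tendsto cw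
        filter_upwards [self_mem_nhdsWithin] with w hw
        exact claim_lt w hw.1 hw.2
      · rw [← h0z]
        simp [hGdef]
  · intro v hzv hv1
    rcases hzv.lt_or_eq with h | h
    · exact claim_gt v h hv1
    · rw [← h]
      rcases hz1.lt_or_eq with hz1' | hz1'
      · -- approach z from the right
        have cw : ContinuousWithinAt G (Set.Ioc z 1) z :=
          (contG z ⟨hz0, hz1⟩).mono (fun x hx => ⟨le_trans hz0 hx.1.le, hx.2⟩)
        haveI : (nhdsWithin z (Set.Ioc z 1)).NeBot := left_nhdsWithin_Ioc_neBot hz1'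
        apply ge_of_tendsto cw
        filter_upwards [self_mem_nhdsWithin] with w hw
        exact claim_gt w hw.1 hw.2
      · rw [hz1']
        exact htot

/-- **Every single-peaked instance admits a SANN permutation**: if each density is
nondecreasing before its peak `pᵢ ∈ [0,1]` and nonincreasing after, and has nonnegative
total value, then some ordering of the agents makes the instance SANN. -/
theorem single_peaked_admits_sann_permutation (n : ℕ) (hn : 1 ≤ n) (f : Fin n → ℝ → ℝ)
    (hint : ∀ i, IntegrableOn (f i) (Set.Icc 0 1))
    (hpeak : ∀ i, ∃ p ∈ Set.Icc (0:ℝ) 1,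
      MonotoneOn (f i) (Set.Icc 0 p) ∧ AntitoneOn (f i) (Set.Icc p 1))
    (hcake : ∀ i, 0 ≤ ∫ z in (0:ℝ)..1, f i z) :
    ∃ σ : Equiv.Perm (Fin n), ∀ x : Fin n → ℝ, x ∈ stdSimplex ℝ (Fin n) →
      ∃ i : Fin n, 0 < x i ∧
        0 ≤ ∫ z in (∑ k ∈ Finset.Iio i, x k)..(∑ k ∈ Finset.Iic i, x k), f (σ i) z := by
  choose z hz01 hzneg hzpos using fun i => sann_exists_z (f i) (hint i) (hpeak i) (hcake i)
  refine ⟨Tuple.sort z, ?_⟩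
  intro x hx
  obtain ⟨hx0, hx1⟩ := hx
  set σ : Equiv.Perm (Fin n) := Tuple.sort z with hσdef
  have hmonoz : Monotone (z ∘ σ) := Tuple.monotone_sort z
  -- the set of positions whose piece starts no later than their agent's switch point
  set S : Finset (Fin n) :=
    univ.filter (fun i => 0 < x i ∧ (∑ k ∈ Finset.Iio i, x k) ≤ z (σ i)) with hSdef
  have hex : ∃ i, 0 < x i := by
    by_contra h
    push_neg at h
    have : ∑ i, x i = 0 := Finset.sum_eq_zero fun i _ => le_antisymm (h i) (hx0 i)
    rw [hx1] at this
    exact one_ne_zero this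
  have hSne : S.Nonempty := by
    obtain ⟨i0, hi0⟩ := hex
    set P : Finset (Fin n) := univ.filter (fun i => 0 < x i) with hPdef
    have hPne : P.Nonempty := ⟨i0, by simp [hPdef, hi0]⟩
    set j0 : Fin n := P.min' hPne with hj0def
    have hj0P : 0 < x j0 := by
      have := P.min'_mem hPne
      simp [hPdef] at this
      exact this
    have hpre0 : (∑ k ∈ Finset.Iio j0, x k) = 0 := by
      apply Finset.sum_eq_zero
      intro k hk
      rw [Finset.mem_Iio] at hk
      by_contra hne
      have hkpos : 0 < x k := lt_of_le_of_ne (hx0 k) (Ne.symm hne)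
      have : j0 ≤ k := P.min'_le k (by simp [hPdef, hkpos])
      exact absurd hk (not_lt.2 this)
    refine ⟨j0, ?_⟩
    simp only [hSdef, Finset.mem_filter, Finset.mem_univ, true_and]
    exact ⟨hj0P, by rw [hpre0]; exact (hz01 (σ j0)).1⟩
  set i0 : Fin n := S.max' hSne with hi0def
  have hi0S := S.max'_mem hSne
  simp only [hSdef, Finset.mem_filter, Finset.mem_univ, true_and] at hi0S
  obtain ⟨hxi0, hpre⟩ := hi0S
  -- the piece of i0 ends no earlier than the switch point
  have hsuf : z (σ i0) ≤ ∑ k ∈ Finset.Iic i0, x k := by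
    by_contra h
    push_neg at h
    have hlt1 : (∑ k ∈ Finset.Iic i0, x k) < 1 := lt_of_lt_of_le h (hz01 (σ i0)).2
    have hexk : ∃ k, i0 < k ∧ 0 < x k := by
      by_contra hk
      push_neg at hk
      have : (∑ k ∈ Finset.Iic i0, x k) = ∑ k, x k := by
        apply Finset.sum_subset (Finset.subset_univ _)
        intro k _ hknot
        rw [Finset.mem_Iic] at hknot
        exact le_antisymm (hk k (not_le.1 hknot)) (hx0 k)
      rw [this, hx1] at hlt1
      exact absurd hlt1 (lt_irrefl 1)
    set Q : Finset (Fin n) := univ.filter (fun k => i0 < k ∧ 0 < x k) with hQdef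
    have hQne : Q.Nonempty := by
      obtain ⟨k, hk1, hk2⟩ := hexk
      exact ⟨k, by simp [hQdef, hk1, hk2]⟩
    set k0 : Fin n := Q.min' hQne with hk0def
    have hk0Q := Q.min'_mem hQne
    simp only [hQdef, Finset.mem_filter, Finset.mem_univ, true_and] at hk0Q
    obtain ⟨hik0, hxk0⟩ := hk0Q
    have hprek : (∑ m ∈ Finset.Iio k0, x m) = ∑ m ∈ Finset.Iic i0, x m := by
      symm
      apply Finset.sum_subset
      · intro m hm
        rw [Finset.mem_Iic] at hm
        exact Finset.mem_Iio.2 (lt_of_le_of_lt hm hik0)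
      · intro m hmIio hmnot
        rw [Finset.mem_Iio] at hmIio
        rw [Finset.mem_Iic] at hmnot
        by_contra hne
        have hmpos : 0 < x m := lt_of_le_of_ne (hx0 m) (Ne.symm hne)
        have : k0 ≤ m := Q.min'_le m (by simp [hQdef, not_le.1 hmnot, hmpos])
        exact absurd hmIio (not_lt.2 this)
    have hk0S : k0 ∈ S := by
      simp only [hSdef, Finset.mem_filter, Finset.mem_univ, true_and]
      refine ⟨hxk0, ?_⟩
      rw [hprek]
      exact le_trans h.le (hmonoz hik0.le)
    exact absurd (S.le_max' k0 hk0S) (not_le.2 hik0)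
  -- conclude
  refine ⟨i0, hxi0, ?_⟩
  set a : ℝ := ∑ k ∈ Finset.Iio i0, x k with hadef
  set b : ℝ := ∑ k ∈ Finset.Iic i0, x k with hbdef
  have ha0 : 0 ≤ a := Finset.sum_nonneg fun k _ => hx0 k
  have hab : a ≤ b := by
    apply Finset.sum_le_sum_of_subset_of_nonneg
    · intro k hk
      rw [Finset.mem_Iio] at hk
      exact Finset.mem_Iic.2 hk.le
    · intro k _ _
      exact hx0 k
  have hb1 : b ≤ 1 := by
    rw [← hx1]
    apply Finset.sum_le_sum_of_subset_of_nonneg (Finset.subset_univ _)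
    intro k _ _
    exact hx0 k
  have hGa : (∫ s in (0:ℝ)..a, f (σ i0) s) ≤ 0 := hzneg (σ i0) a ha0 hpre
  have hGb : 0 ≤ ∫ s in (0:ℝ)..b, f (σ i0) s := hzpos (σ i0) b hsuf hb1
  have hsub : (∫ s in (0:ℝ)..b, f (σ i0) s) - (∫ s in (0:ℝ)..a, f (σ i0) s)
      = ∫ s in a..b, f (σ i0) s :=
    intervalIntegral.integral_interval_sub_left
      (sann_intInt (f (σ i0)) (hint (σ i0)) le_rfl (ha0.trans hab) hb1)
      (sann_intInt (f (σ i0)) (hint (σ i0)) le_rfl ha0 (hab.trans hb1))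
  linarith [hsub]
end

section
/- Consider three agents with densities f₁(z) = −1 on [0,1/2] and 3 on (1/2,1], f₂(z) = 1 on [0,1], and f₃(z) = 3 on [0,1/2] and −1 on (1/2,1]. Then there is no cut-set (x₁,x₂,x₃) in the standard 2-simplex for which the three values ∫_0^{x₁} f₁, ∫_{x₁}^{x₁+x₂} f₂, ∫_{x₁+x₂}^{1} f₃ are all equal; i.e., no connected equitable allocation exists in which the agents are ordered (1,2,3) from left to right. -/
open MeasureTheory

lemma step_integrable (c d a b : ℝ) :
    IntervalIntegrable (fun z => if z ≤ 1/2 then c else d) volume a b := by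
  rw [intervalIntegrable_iff]
  apply Measure.integrableOn_of_bounded (M := max |c| |d|) measure_Ioc_lt_top.ne
  · exact ((measurable_const.ite measurableSet_Iic measurable_const)).aestronglyMeasurable
  · filter_upwards with z
    by_cases h : z ≤ 1/2
    · rw [if_pos h]; exact le_max_left _ _
    · rw [if_neg h]; exact le_max_right _ _

lemma step_int_left (c d a : ℝ) (ha : a ≤ 1/2) :
    (∫ z in (0:ℝ)..a, (if z ≤ 1/2 then c else d)) = a * c := by
  rw [intervalIntegral.integral_congr (g := fun _ => c), intervalIntegral.integral_const, smul_eq_mul,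
    sub_zero]
  intro z hz
  rw [Set.uIcc_comm] at hz
  have := (Set.mem_uIcc.mp hz)
  have hz2 : z ≤ 1/2 := by rcases this with ⟨_, h2⟩ | ⟨_, h2⟩ <;> linarith
  exact if_pos hz2

lemma step_int_right (c d a b : ℝ) (ha : 1/2 ≤ a) (hab : a ≤ b) :
    (∫ z in a..b, (if z ≤ 1/2 then c else d)) = (b - a) * d := by
  rcases eq_or_lt_of_le hab with rfl | hab
  · simp
  rw [intervalIntegral.integral_congr_ae, intervalIntegral.integral_const, smul_eq_mul]
  filter_upwards with z hz
  rw [Set.uIoc_of_le hab.le] at hz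
  have : ¬ z ≤ 1/2 := by push_neg; linarith [hz.1]
  exact if_neg this

lemma step_int_split (c d a b : ℝ) (ha : a ≤ 1/2) (hb : 1/2 ≤ b) :
    (∫ z in a..b, (if z ≤ 1/2 then c else d)) = (1/2 - a) * c + (b - 1/2) * d := by
  rw [← intervalIntegral.integral_add_adjacent_intervals (b := 1/2)
    (step_integrable c d a (1/2)) (step_integrable c d (1/2) b)]
  have h1 : (∫ z in a..(1/2:ℝ), (if z ≤ 1/2 then c else d)) = (1/2 - a) * c := by
    rw [intervalIntegral.integral_congr (g := fun _ => c), intervalIntegral.integral_const, smul_eq_mul]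
    intro z hz
    rw [Set.uIcc_of_le ha] at hz
    exact if_pos hz.2
  rw [h1, step_int_right c d (1/2) b le_rfl hb]

/-- **Agent ordering matters**: for the three-agent instance with densities
`f₁ = -1` on `[0,1/2]` and `3` on `(1/2,1]`, `f₂ = 1`, and `f₃ = 3` on `[0,1/2]` and
`-1` on `(1/2,1]`, there is no connected equitable allocation in which the agents are
ordered `(1,2,3)` from left to right. -/
theorem no_equitable_in_order_123 :
    ¬ ∃ x₁ x₂ x₃ : ℝ, 0 ≤ x₁ ∧ 0 ≤ x₂ ∧ 0 ≤ x₃ ∧ x₁ + x₂ + x₃ = 1 ∧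
      (∫ z in (0:ℝ)..x₁, (if z ≤ 1/2 then (-1:ℝ) else 3)) =
        (∫ z in x₁..(x₁ + x₂), (1:ℝ)) ∧
      (∫ z in x₁..(x₁ + x₂), (1:ℝ)) =
        (∫ z in (x₁ + x₂)..(1:ℝ), (if z ≤ 1/2 then (3:ℝ) else -1)) := by
  rintro ⟨x₁, x₂, x₃, h1, h2, h3, hsum, h12, h23⟩
  have hV2 : (∫ z in x₁..(x₁ + x₂), (1:ℝ)) = x₂ := by simp
  rw [hV2] at h12 h23
  have hy1 : x₁ + x₂ ≤ 1 := by linarith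
  by_cases hx : x₁ ≤ 1/2
  · -- V1 = -x₁
    rw [step_int_left _ _ _ hx] at h12
    have hx10 : x₁ = 0 := by nlinarith
    have hx20 : x₂ = 0 := by nlinarith
    -- x₁ + x₂ = 0 ≤ 1/2, V3 = 1
    have : (∫ z in (x₁ + x₂)..(1:ℝ), (if z ≤ 1/2 then (3:ℝ) else -1)) = 1 := by
      rw [hx10, hx20]
      rw [show ((0:ℝ) + 0 : ℝ) = 0 by ring]
      rw [step_int_split 3 (-1) 0 1 (by norm_num) (by norm_num)]
      ring
    rw [this] at h23
    linarith
  · push_neg at hx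
    rw [step_int_split (-1) 3 0 x₁ (by norm_num) hx.le] at h12
    rw [step_int_right 3 (-1) _ _ (by linarith) hy1] at h23
    nlinarith
end
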